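/- arXiv:1908.05975 — 8 statements merged into one kernel-verified Lean document; each statement's English description precedes it below -/
import Mathlib

section
/- Let g be a finite-dimensional real nilpotent Lie algebra with a nice basis {e_1,…,e_n}, and let σ be an arrow-breaking involution of this basis. Then every σ-diagonal metric on g is Ricci-flat. -/
open scoped BigOperators
open Matrix

namespace ArrowBreakingPaper

variable {ι : Type*} {g : Type*} [LieRing g] [LieAlgebra ℝ g]

/-- `⁅e i, e j⁆` is a nonzero multiple of `e k` (the arrow `e i →^{e j} e k`). -/
def Arrow (e : ι → g) (i j k : ι) : Prop :=
  ∃ c : ℝ, c ≠ 0 ∧ ⁅e i, e j⁆ = c • e k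

/-- A basis is *nice* if each bracket of two basis vectors is a multiple of a single basis
vector, and for all `i`, `k` there is at most one `j` such that the `e k`-coefficient of
`⁅e i, e j⁆` is nonzero. -/
def IsNiceBasis (e : Module.Basis ι ℝ g) : Prop :=
  (∀ i j : ι, ∃ (k : ι) (c : ℝ), ⁅e i, e j⁆ = c • e k) ∧
  (∀ i k j j' : ι, e.repr ⁅e i, e j⁆ k ≠ 0 → e.repr ⁅e i, e j'⁆ k ≠ 0 → j = j')

/-- An *arrow-breaking involution* of the (nice) basis `e`. -/
def IsArrowBreaking (e : ι → g) (σ : Equiv.Perm ι) : Prop :=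
  (∀ i, σ (σ i) = i) ∧
  (∀ i j k, Arrow e i j k → ∀ l, ¬ Arrow e l (σ j) (σ k)) ∧
  (∀ i j k, Arrow e i j k → ∀ m, ¬ Arrow e (σ i) (σ j) m)

/-- A `σ`-diagonal metric: `⟨e i, e (σ j)⟩ = gᵢ δᵢⱼ` with all `gᵢ ≠ 0` and `g_{σ i} = gᵢ`. -/
def IsSigmaDiagonal [DecidableEq ι] (e : Module.Basis ι ℝ g) (σ : Equiv.Perm ι)
    (B : LinearMap.BilinForm ℝ g) : Prop :=
  ∃ gv : ι → ℝ, (∀ i, gv i ≠ 0) ∧ (∀ i, gv (σ i) = gv i) ∧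
    ∀ i j, B (e i) (e (σ j)) = if i = j then gv i else 0

/-- Symmetry of a bilinear form. -/
def IsSymm (B : LinearMap.BilinForm ℝ g) : Prop := ∀ x y : g, B x y = B y x

/-- Nondegeneracy of a bilinear form. -/
def Nondeg (B : LinearMap.BilinForm ℝ g) : Prop :=
  ∀ v : g, (∀ w : g, B v w = 0) → v = 0

/-- The Gram matrix of a bilinear form in a basis. -/
noncomputable def gram [Fintype ι] (e : Module.Basis ι ℝ g) (B : LinearMap.BilinForm ℝ g) :
    Matrix ι ι ℝ := Matrix.of fun i j => B (e i) (e j)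

/-- The Ricci curvature `ric(v,w) = ½⟨dv♭, dw♭⟩ − ½⟨ad v, ad w⟩` written in the
coordinates of a basis `e`, where `dα(x,y) = −α(⁅x,y⁆)` and the scalar products on
`Λ²g*` and `g*⊗g` are induced by the dual metric (inverse Gram matrix). -/
noncomputable def ricci [Fintype ι] [DecidableEq ι] (e : Module.Basis ι ℝ g)
    (B : LinearMap.BilinForm ℝ g) (v w : g) : ℝ :=
  (1/2) * ((1/2) * ∑ i, ∑ j, ∑ k, ∑ l,
      (gram e B)⁻¹ i k * (gram e B)⁻¹ j l * (-(B v ⁅e i, e j⁆)) * (-(B w ⁅e k, e l⁆)))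
  - (1/2) * ∑ i, ∑ j, (gram e B)⁻¹ i j * B ⁅v, e i⁆ ⁅w, e j⁆

/-- Ricci-flatness of a metric on a Lie algebra. -/
def IsRicciFlat (B : LinearMap.BilinForm ℝ g) : Prop :=
  ∀ (m : ℕ) (e : Module.Basis (Fin m) ℝ g) (v w : g), ricci e B v w = 0

/-- The Koszul formula characterizing the Levi-Civita connection. -/
def IsLeviCivita (B : LinearMap.BilinForm ℝ g) (nab : g → g → g) : Prop :=
  ∀ u v w : g, 2 * B (nab u v) w = B ⁅u, v⁆ w - B ⁅v, w⁆ u + B ⁅w, u⁆ v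

/-- The curvature `R(u,v)w = ∇_{⁅u,v⁆} w − ∇_u ∇_v w + ∇_v ∇_u w`. -/
def curv (nab : g → g → g) (u v w : g) : g :=
  nab ⁅u, v⁆ w - nab u (nab v w) + nab v (nab u w)

/-- Flatness of a metric on a Lie algebra. -/
def IsFlat (B : LinearMap.BilinForm ℝ g) : Prop :=
  ∃ nab : g → g → g, IsLeviCivita B nab ∧ ∀ u v w : g, curv nab u v w = 0


section Aux
variable [Fintype ι] [DecidableEq ι] [FiniteDimensional ℝ g]
variable {B : LinearMap.BilinForm ℝ g}

lemma isUnit_gram_det (e : Module.Basis ι ℝ g) (hB : B.Nondegenerate) : IsUnit (gram e B).det := by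
  have : gram e B = LinearMap.BilinForm.toMatrix e B := by
    ext i j; simp [gram, BilinForm.toMatrix_apply]
  rw [this, isUnit_iff_ne_zero]
  exact (LinearMap.BilinForm.nondegenerate_iff_det_ne_zero e).mp hB

lemma gram_transpose (e : Module.Basis ι ℝ g) (hs : IsSymm B) : (gram e B)ᵀ = gram e B := by
  ext i j; simp [gram, Matrix.transpose_apply, hs (e i) (e j)]

lemma gram_inv_symm (e : Module.Basis ι ℝ g) (hs : IsSymm B) (i j : ι) :
    (gram e B)⁻¹ i j = (gram e B)⁻¹ j i := by
  conv_lhs => rw [← gram_transpose e hs, ← Matrix.transpose_nonsing_inv]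
  rfl

lemma toDual_symm_eq (e : Module.Basis ι ℝ g) (hB : B.Nondegenerate) (hs : IsSymm B)
    (α : Module.Dual ℝ g) :
    (B.toDual hB).symm α = ∑ i, ∑ j, ((gram e B)⁻¹ i j * α (e j)) • e i := by
  apply (B.toDual hB).injective
  rw [LinearEquiv.apply_symm_apply]
  refine e.ext fun k => ?_
  rw [map_sum]
  simp only [LinearMap.coe_sum, Finset.sum_apply, map_sum, _root_.map_smul, LinearMap.smul_apply,
    smul_eq_mul]
  have hd : ∀ i k : ι, (B.toDual hB) (e i) (e k) = gram e B i k := fun i k => rfl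
  simp only [hd]
  have hmul : (gram e B)⁻¹ * gram e B = 1 := Matrix.nonsing_inv_mul _ (isUnit_gram_det e hB)
  rw [Finset.sum_comm]
  have h1 : ∀ j, (∑ i, (gram e B)⁻¹ i j * α (e j) * gram e B i k)
      = α (e j) * (1 : Matrix ι ι ℝ) j k := by
    intro j
    have h2 : ∑ i, (gram e B)⁻¹ j i * gram e B i k = (1 : Matrix ι ι ℝ) j k := by
      rw [← hmul]; rfl
    rw [← h2, Finset.mul_sum]
    refine Finset.sum_congr rfl fun i _ => ?_
    rw [gram_inv_symm e hs i j]; ring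
  simp only [h1]
  simp [Matrix.one_apply]


lemma contract_pair (e : Module.Basis ι ℝ g) (hB : B.Nondegenerate) (hs : IsSymm B)
    (f h : Module.Dual ℝ g) :
    ∑ j, ∑ l, (gram e B)⁻¹ j l * f (e j) * h (e l) = h ((B.toDual hB).symm f) := by
  rw [toDual_symm_eq e hB hs f, map_sum]
  rw [Finset.sum_comm]
  refine Finset.sum_congr rfl fun l _ => ?_
  rw [map_sum]
  refine Finset.sum_congr rfl fun j _ => ?_
  rw [_root_.map_smul, smul_eq_mul, gram_inv_symm e hs l j]

lemma contract_trace (e : Module.Basis ι ℝ g) (hB : B.Nondegenerate) (hs : IsSymm B)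
    (F : g →ₗ[ℝ] Module.Dual ℝ g) :
    ∑ i, ∑ j, (gram e B)⁻¹ i j * F (e i) (e j)
      = LinearMap.trace ℝ g ((B.toDual hB).symm.toLinearMap ∘ₗ F) := by
  rw [LinearMap.trace_eq_matrix_trace ℝ e, Matrix.trace]
  refine Finset.sum_congr rfl fun k _ => ?_
  rw [Matrix.diag_apply, LinearMap.toMatrix_apply, LinearMap.comp_apply,
    LinearEquiv.coe_coe, toDual_symm_eq e hB hs (F (e k))]
  simp only [map_sum, _root_.map_smul, Module.Basis.repr_self, Finset.sum_apply',
    Finsupp.smul_apply, Finsupp.single_apply, smul_eq_mul, mul_ite, mul_one, mul_zero]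
  rw [Finset.sum_comm]
  simp


/-- The bilinear map `(x, y) ↦ B ⁅v, x⁆ ⁅w, y⁆`, as a map into the dual. -/
noncomputable def Fmap (B : LinearMap.BilinForm ℝ g) (v w : g) :
    g →ₗ[ℝ] Module.Dual ℝ g :=
  B.compl₁₂ (LieAlgebra.ad ℝ g v) (LieAlgebra.ad ℝ g w)

lemma Fmap_apply (B : LinearMap.BilinForm ℝ g) (v w x y : g) :
    Fmap B v w x y = B ⁅v, x⁆ ⁅w, y⁆ := rfl

noncomputable def Emap (B : LinearMap.BilinForm ℝ g) (hB : B.Nondegenerate) (v : g) :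
    g →ₗ[ℝ] g :=
  (B.toDual hB).symm.toLinearMap ∘ₗ
    (LinearMap.llcomp ℝ g g ℝ (B v) ∘ₗ (LieAlgebra.ad ℝ g : g →ₗ[ℝ] Module.End ℝ g))

lemma Emap_apply (B : LinearMap.BilinForm ℝ g) (hB : B.Nondegenerate) (v x : g) :
    Emap B hB v x = (B.toDual hB).symm ((B v) ∘ₗ (LieAlgebra.ad ℝ g x : g →ₗ[ℝ] g)) := rfl

noncomputable def Cmap (B : LinearMap.BilinForm ℝ g) (hB : B.Nondegenerate) (v w : g) :
    g →ₗ[ℝ] Module.Dual ℝ g :=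
  (-(LinearMap.llcomp ℝ g g ℝ (B w) ∘ₗ (LieAlgebra.ad ℝ g : g →ₗ[ℝ] Module.End ℝ g))) ∘ₗ Emap B hB v

lemma Cmap_apply (B : LinearMap.BilinForm ℝ g) (hB : B.Nondegenerate) (v w x z : g) :
    Cmap B hB v w x z = B w ⁅z, Emap B hB v x⁆ := by
  have : Cmap B hB v w x z = -(B w ⁅Emap B hB v x, z⁆) := rfl
  rw [this, ← map_neg, lie_skew]

lemma ricci_repr (e : Module.Basis ι ℝ g) (hB : B.Nondegenerate) (hs : IsSymm B) (v w : g) :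
    ricci e B v w
      = (1/2) * ((1/2) *
          LinearMap.trace ℝ g ((B.toDual hB).symm.toLinearMap ∘ₗ Cmap B hB v w))
      - (1/2) * LinearMap.trace ℝ g ((B.toDual hB).symm.toLinearMap ∘ₗ Fmap B v w) := by
  unfold ricci
  have h2 : ∑ i, ∑ j, (gram e B)⁻¹ i j * B ⁅v, e i⁆ ⁅w, e j⁆
      = LinearMap.trace ℝ g ((B.toDual hB).symm.toLinearMap ∘ₗ Fmap B v w) := by
    rw [← contract_trace e hB hs (Fmap B v w)]
    rfl
  have key : ∀ i k : ι, (∑ j, ∑ l,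
        (gram e B)⁻¹ j l * ((B v) ⁅e i, e j⁆) * ((B w) ⁅e k, e l⁆))
      = Cmap B hB v w (e i) (e k) := by
    intro i k
    have := contract_pair e hB hs ((B v) ∘ₗ (LieAlgebra.ad ℝ g (e i) : g →ₗ[ℝ] g))
      ((B w) ∘ₗ (LieAlgebra.ad ℝ g (e k) : g →ₗ[ℝ] g))
    simp only [LinearMap.comp_apply, LieAlgebra.ad_apply] at this
    rw [this, Cmap_apply, Emap_apply]
  have h1 : ∑ i, ∑ j, ∑ k, ∑ l,
        (gram e B)⁻¹ i k * (gram e B)⁻¹ j l * (-(B v ⁅e i, e j⁆)) * (-(B w ⁅e k, e l⁆))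
      = LinearMap.trace ℝ g ((B.toDual hB).symm.toLinearMap ∘ₗ Cmap B hB v w) := by
    rw [← contract_trace e hB hs (Cmap B hB v w)]
    refine Finset.sum_congr rfl fun i _ => ?_
    rw [Finset.sum_comm]
    refine Finset.sum_congr rfl fun k _ => ?_
    rw [← key i k, Finset.mul_sum]
    refine Finset.sum_congr rfl fun j _ => ?_
    rw [Finset.mul_sum]
    refine Finset.sum_congr rfl fun l _ => ?_
    ring
  rw [h1, h2]

end Aux

theorem statement0 {n : ℕ} {g : Type*} [LieRing g] [LieAlgebra ℝ g]
    [LieRing.IsNilpotent g]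
    (e : Module.Basis (Fin n) ℝ g) (hnice : IsNiceBasis e)
    (σ : Equiv.Perm (Fin n)) (hab : IsArrowBreaking (⇑e) σ)
    (B : LinearMap.BilinForm ℝ g) (hsymm : IsSymm B) (hnd : Nondeg B)
    (hdiag : IsSigmaDiagonal e σ B) :
    IsRicciFlat B := by
  classical
  haveI : FiniteDimensional ℝ g := Module.Finite.of_basis e
  have hrefl : B.IsRefl := fun x y h => (hsymm y x).trans h
  have hB : B.Nondegenerate := (LinearMap.IsRefl.nondegenerate_iff_separatingLeft hrefl).mpr hnd
  obtain ⟨gv, hgv0, hgvσ, hBe⟩ := hdiag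
  have hσσ : ∀ i, σ (σ i) = i := hab.1
  have hgram : ∀ i j, gram e B i j = if i = σ j then gv i else 0 := by
    intro i j
    have hj : e j = e (σ (σ j)) := by rw [hσσ]
    show B (e i) (e j) = _
    rw [hj]
    exact hBe i (σ j)
  set H : Matrix (Fin n) (Fin n) ℝ := Matrix.of fun i j => if j = σ i then (gv i)⁻¹ else 0
    with hHdef
  have hHapp : ∀ i j, H i j = if j = σ i then (gv i)⁻¹ else 0 := fun i j => rfl
  have hinv : (gram e B)⁻¹ = H := by
    apply Matrix.inv_eq_right_inv
    ext i k
    rw [Matrix.mul_apply]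
    rw [Finset.sum_eq_single (σ i)]
    · rw [hgram, hHapp]
      rw [if_pos (hσσ i).symm, hσσ i, hgvσ i, Matrix.one_apply]
      by_cases hk : k = i
      · subst hk; rw [if_pos rfl, if_pos rfl, mul_inv_cancel₀ (hgv0 k)]
      · rw [if_neg hk, if_neg fun h => hk h.symm, mul_zero]
    · intro j _ hj
      rw [hgram]
      have hij : ¬ (i = σ j) := fun h => hj (by rw [h, hσσ])
      rw [if_neg hij, zero_mul]
    · intro h; exact absurd (Finset.mem_univ _) h
  -- first vanishing: both brackets of a σ-pair cannot be nonzero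
  have hzero1 : ∀ (v w : g) (i j : Fin n),
      B v ⁅e i, e j⁆ * B w ⁅e (σ i), e (σ j)⁆ = 0 := by
    intro v w i j
    obtain ⟨k, c, hk⟩ := hnice.1 i j
    by_cases hc : c = 0
    · rw [hk, hc, zero_smul, map_zero, zero_mul]
    obtain ⟨m, c', hm⟩ := hnice.1 (σ i) (σ j)
    by_cases hc' : c' = 0
    · rw [hm, hc', zero_smul, map_zero, mul_zero]
    exact absurd ⟨c', hc', hm⟩ (hab.2.2 i j k ⟨c, hc, hk⟩ m)
  -- second vanishing
  have hzero2 : ∀ (v w : g) (i : Fin n), B ⁅v, e i⁆ ⁅w, e (σ i)⁆ = 0 := by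
    intro v w i
    have hbasis : ∀ a b : Fin n, B ⁅e a, e i⁆ ⁅e b, e (σ i)⁆ = 0 := by
      intro a b
      obtain ⟨k, c, hk⟩ := hnice.1 a i
      by_cases hc : c = 0
      · rw [hk, hc, zero_smul, map_zero, LinearMap.zero_apply]
      obtain ⟨k', c', hk'⟩ := hnice.1 b (σ i)
      by_cases hc' : c' = 0
      · rw [hk', hc', zero_smul, map_zero]
      rw [hk, hk']
      have hBkk' : B (e k) (e k') = if k = σ k' then gv k else 0 := by
        have hk'' : e k' = e (σ (σ k')) := by rw [hσσ]
        rw [hk'']; exact hBe k (σ k')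
      by_cases hkk : k = σ k'
      · exfalso
        have hk'2 : k' = σ k := by rw [hkk, hσσ]
        exact (hab.2.1 a i k ⟨c, hc, hk⟩ b) ⟨c', hc', by rw [← hk'2]; exact hk'⟩
      · simp only [LinearMapClass.map_smul, LinearMap.smul_apply, smul_eq_mul, hBkk',
          if_neg hkk, mul_zero]
    have hmap0 : (B.compl₁₂ ((LieAlgebra.ad ℝ g (e i) : g →ₗ[ℝ] g))
        ((LieAlgebra.ad ℝ g (e (σ i)) : g →ₗ[ℝ] g))) = 0 := by
      refine e.ext fun a => e.ext fun b => ?_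
      show B ⁅e i, e a⁆ ⁅e (σ i), e b⁆ = (0 : LinearMap.BilinForm ℝ g) (e a) (e b)
      have h' : B (-⁅e a, e i⁆) (-⁅e b, e (σ i)⁆) = 0 := by
        simp only [map_neg, LinearMap.neg_apply, neg_neg]
        exact hbasis a b
      rw [← lie_skew (e i) (e a), ← lie_skew (e (σ i)) (e b), h']
      simp
    have h0 : B ⁅e i, v⁆ ⁅e (σ i), w⁆ = 0 := by
      have : B ⁅e i, v⁆ ⁅e (σ i), w⁆
          = (B.compl₁₂ ((LieAlgebra.ad ℝ g (e i) : g →ₗ[ℝ] g))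
            ((LieAlgebra.ad ℝ g (e (σ i)) : g →ₗ[ℝ] g))) v w := rfl
      rw [this, hmap0]; simp
    have h' : B (-⁅e i, v⁆) (-⁅e (σ i), w⁆) = 0 := by
      simp only [map_neg, LinearMap.neg_apply, neg_neg]
      exact h0
    rw [← lie_skew v (e i), ← lie_skew w (e (σ i))]
    exact h'
  -- Ricci of the nice basis vanishes
  have hnicezero : ∀ v w : g, ricci e B v w = 0 := by
    intro v w
    unfold ricci
    rw [hinv]
    have t1 : ∑ i, ∑ j, ∑ k, ∑ l,
        H i k * H j l * (-(B v ⁅e i, e j⁆)) * (-(B w ⁅e k, e l⁆)) = 0 := by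
      refine Finset.sum_eq_zero fun i _ => Finset.sum_eq_zero fun j _ =>
        Finset.sum_eq_zero fun k _ => Finset.sum_eq_zero fun l _ => ?_
      by_cases hk : k = σ i
      · by_cases hl : l = σ j
        · subst hk; subst hl
          have heq : H i (σ i) * H j (σ j) * (-(B v ⁅e i, e j⁆)) * (-(B w ⁅e (σ i), e (σ j)⁆))
              = H i (σ i) * H j (σ j) * (B v ⁅e i, e j⁆ * B w ⁅e (σ i), e (σ j)⁆) := by ring
          rw [heq, hzero1, mul_zero]
        · rw [hHapp j l, if_neg hl, mul_zero, zero_mul, zero_mul]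
      · rw [hHapp i k, if_neg hk, zero_mul, zero_mul, zero_mul]
    have t2 : ∑ i, ∑ j, H i j * B ⁅v, e i⁆ ⁅w, e j⁆ = 0 := by
      refine Finset.sum_eq_zero fun i _ => Finset.sum_eq_zero fun j _ => ?_
      by_cases hj : j = σ i
      · subst hj; rw [hzero2, mul_zero]
      · rw [hHapp i j, if_neg hj, zero_mul]
    rw [t1, t2]
    ring
  -- transfer to an arbitrary basis via the basis-independent formula
  intro m e' v w
  rw [ricci_repr e' hB hsymm v w, ← ricci_repr e hB hsymm v w]
  exact hnicezero v w

end ArrowBreakingPaper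
end

section
/- Let g be a finite-dimensional real nilpotent Lie algebra with a nice basis {e_1,…,e_n}, let σ be an arrow-breaking involution of this basis, and let ⟨·,·⟩ be a σ-diagonal metric on g. Then the bilinear form induced by ⟨·,·⟩ on g*⊗g ≅ End(g) vanishes identically on the subspace ad(g) = {ad x : x ∈ g} (that is, ⟨ad x, ad y⟩ = 0 for all x,y ∈ g), and the bilinear form induced by ⟨·,·⟩ on Λ²g* vanishes identically on the subspace d(g*) = {dα : α ∈ g*} (that is, ⟨dα, dβ⟩ = 0 for all α,β ∈ g*). -/
open scoped BigOperators

namespace ArrowBreakingPaper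

variable {ι : Type*} {g : Type*} [LieRing g] [LieAlgebra ℝ g]

/-- For a `σ`-diagonal metric associated to an arrow-breaking involution of a
nice basis, the induced bilinear form on `g*⊗g` vanishes on `ad(g)` and the induced bilinear
form on `Λ²g*` vanishes on `d(g*)`. -/
theorem statement1 {n : ℕ} {g : Type*} [LieRing g] [LieAlgebra ℝ g]
    [LieRing.IsNilpotent g]
    (e : Module.Basis (Fin n) ℝ g) (hnice : IsNiceBasis e)
    (σ : Equiv.Perm (Fin n)) (hab : IsArrowBreaking (⇑e) σ)
    (B : LinearMap.BilinForm ℝ g) (hsymm : IsSymm B) (hnd : Nondeg B)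
    (hdiag : IsSigmaDiagonal e σ B) :
    (∀ x y : g,
      ∑ i, ∑ j, (gram e B)⁻¹ i j * B ⁅x, e i⁆ ⁅y, e j⁆ = 0) ∧
    (∀ α β : Module.Dual ℝ g,
      (1/2 : ℝ) * ∑ i, ∑ j, ∑ k, ∑ l,
        (gram e B)⁻¹ i k * (gram e B)⁻¹ j l *
          (-(α ⁅e i, e j⁆)) * (-(β ⁅e k, e l⁆)) = 0) := by
  obtain ⟨gv, hgv0, hgvσ, hB⟩ := hdiag
  have hσσ := hab.1
  -- Gram matrix in explicit form
  have hgram : ∀ i j, gram e B i j = if i = σ j then gv i else 0 := by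
    intro i j
    have h := hB i (σ j)
    rw [hσσ j] at h
    simpa [gram] using h
  -- inverse Gram matrix in explicit form
  have hinv : (gram e B)⁻¹ = Matrix.of fun i j => if σ i = j then (gv i)⁻¹ else 0 := by
    apply Matrix.inv_eq_right_inv
    ext i j
    rw [Matrix.mul_apply]
    rw [Finset.sum_eq_single (σ i)]
    · simp only [hgram, Matrix.of_apply, hσσ i]
      rcases eq_or_ne i j with h | h
      · subst h
        simp [hgvσ, hgv0 i, Matrix.one_apply]
      · simp [h, Matrix.one_apply, Ne.symm h]
    · intro k _ hk
      have : i ≠ σ k := by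
        intro h
        apply hk
        rw [h, hσσ]
      simp [hgram, this]
    · simp
  -- key fact 1 : the ad-terms vanish on basis vectors
  have key1 : ∀ a i b, B ⁅e a, e i⁆ ⁅e b, e (σ i)⁆ = 0 := by
    intro a i b
    obtain ⟨k, c, hc⟩ := hnice.1 a i
    obtain ⟨k', c', hc'⟩ := hnice.1 b (σ i)
    rw [hc, hc']
    simp only [map_smul, LinearMap.smul_apply, smul_eq_mul]
    rcases eq_or_ne c 0 with h | h
    · simp [h]
    rcases eq_or_ne c' 0 with h' | h'
    · simp [h']
    have hBkk' : B (e k) (e k') = 0 := by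
      have hkk : k ≠ σ k' := by
        intro hkk
        have hk' : k' = σ k := by rw [hkk, hσσ]
        exact hab.2.1 a i k ⟨c, h, hc⟩ b (by rw [← hk']; exact ⟨c', h', hc'⟩)
      have hbb := hB k (σ k')
      rw [hσσ k'] at hbb
      rw [hbb, if_neg hkk]
    rw [hBkk']
    ring
  -- key fact 1, extended bilinearly
  have key1x : ∀ (x y : g) (i : Fin n), B ⁅x, e i⁆ ⁅y, e (σ i)⁆ = 0 := by
    intro x y i
    let adr : g → g →ₗ[ℝ] g := fun z =>
      { toFun := fun w => ⁅w, z⁆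
        map_add' := fun a b => add_lie a b z
        map_smul' := fun c a => smul_lie c a z }
    have hzero : B.compl₁₂ (adr (e i)) (adr (e (σ i))) = 0 :=
      LinearMap.ext_basis e e fun a b => by
        simpa [adr, LinearMap.compl₁₂_apply] using key1 a i b
    have h : B.compl₁₂ (adr (e i)) (adr (e (σ i))) x y = 0 := by
      rw [hzero]; simp
    simpa [adr, LinearMap.compl₁₂_apply] using h
  -- key fact 2 : broken arrows
  have key2 : ∀ i j, ⁅e i, e j⁆ = 0 ∨ ⁅e (σ i), e (σ j)⁆ = 0 := by
    intro i j
    obtain ⟨m, c, hc⟩ := hnice.1 i j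
    obtain ⟨m', c', hc'⟩ := hnice.1 (σ i) (σ j)
    rcases eq_or_ne c 0 with h | h
    · left; rw [hc, h, zero_smul]
    rcases eq_or_ne c' 0 with h' | h'
    · right; rw [hc', h', zero_smul]
    exact absurd ⟨c', h', hc'⟩ (hab.2.2 i j m ⟨c, h, hc⟩ m')
  constructor
  · intro x y
    apply Finset.sum_eq_zero
    intro i _
    apply Finset.sum_eq_zero
    intro j _
    rcases eq_or_ne (σ i) j with h | h
    · rw [← h, key1x, mul_zero]
    · have : (gram e B)⁻¹ i j = 0 := by rw [hinv]; simp [h]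
      rw [this, zero_mul]
  · intro α β
    rw [mul_eq_zero]
    right
    apply Finset.sum_eq_zero; intro i _
    apply Finset.sum_eq_zero; intro j _
    apply Finset.sum_eq_zero; intro k _
    apply Finset.sum_eq_zero; intro l _
    rcases eq_or_ne (σ i) k with hk | hk
    · rcases eq_or_ne (σ j) l with hl | hl
      · subst hk; subst hl
        rcases key2 i j with h | h
        · rw [h]; simp
        · rw [h]; simp
      · have : (gram e B)⁻¹ j l = 0 := by rw [hinv]; simp [hl]
        rw [this]; ring
    · have : (gram e B)⁻¹ i k = 0 := by rw [hinv]; simp [hk]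
      rw [this]; ring

end ArrowBreakingPaper
end

section
/- Let (g,⟨·,·⟩) be a finite-dimensional real Lie algebra with a nondegenerate symmetric bilinear form. Fix a basis {e_1,…,e_p} of the commutator ideal g' = [g,g] and elements x_1,…,x_p ∈ g with ⟨e_i,x_j⟩ = δ_{ij}, and for i = 1,…,p define the endomorphism J_i of g by ⟨J_i u, v⟩ = ⟨[u,v], x_i⟩ for all u,v ∈ g. Then the Levi-Civita connection ∇ of (g,⟨·,·⟩) satisfies, for all u,v ∈ g: 2∇_u v = Σ_{i=1}^p ( ⟨J_i u, v⟩ e_i − ⟨e_i, v⟩ J_i u − ⟨e_i, u⟩ J_i v ). -/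
open scoped BigOperators

namespace ArrowBreakingPaper

variable {ι : Type*} {g : Type*} [LieRing g] [LieAlgebra ℝ g]

/-- Koszul formula for the Levi-Civita connection of a metric Lie algebra in
terms of the maps `J i`. -/
theorem statement2 {g : Type*} [LieRing g] [LieAlgebra ℝ g]
    (B : LinearMap.BilinForm ℝ g) (hsymm : IsSymm B) (hnd : Nondeg B)
    {p : ℕ} (e : Fin p → g) (x : Fin p → g)
    (hind : LinearIndependent ℝ e)
    (hspan : Submodule.span ℝ (Set.range e) =
      Submodule.span ℝ {z : g | ∃ u v : g, z = ⁅u, v⁆})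
    (hx : ∀ i j, B (e i) (x j) = if i = j then 1 else 0)
    (J : Fin p → g →ₗ[ℝ] g)
    (hJ : ∀ i (u v : g), B (J i u) v = B ⁅u, v⁆ (x i))
    (nab : g → g → g) (hnab : IsLeviCivita B nab) :
    ∀ u v : g, (2 : ℝ) • nab u v =
      ∑ i, (B (J i u) v • e i - B (e i) v • J i u - B (e i) u • J i v) := by
  intro u v
  have hbr : ∀ a b : g, ⁅a, b⁆ ∈ Submodule.span ℝ (Set.range e) := by
    intro a b
    rw [hspan]
    exact Submodule.subset_span ⟨a, b, rfl⟩
  have hrep : ∀ z : g, z ∈ Submodule.span ℝ (Set.range e) →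
      z = ∑ i, B z (x i) • e i := by
    intro z hz
    induction hz using Submodule.span_induction with
    | mem z hz =>
        obtain ⟨j, rfl⟩ := hz
        simp [hx]
    | zero => simp
    | add a b ha hb iha ihb =>
        simp only [map_add, LinearMap.add_apply, add_smul, Finset.sum_add_distrib]
        rw [← iha, ← ihb]
    | smul c a ha iha =>
        simp only [map_smul, LinearMap.smul_apply, smul_eq_mul, mul_smul, ← Finset.smul_sum]
        rw [← iha]
  have key : ∀ a b w : g, B ⁅a, b⁆ w = ∑ i, B ⁅a, b⁆ (x i) * B (e i) w := by
    intro a b w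
    conv_lhs => rw [hrep ⁅a, b⁆ (hbr a b)]
    simp [smul_eq_mul]
  rw [← sub_eq_zero]
  apply hnd
  intro w
  have hk := hnab u v w
  rw [map_sub, LinearMap.sub_apply, sub_eq_zero]
  have h1 : B ((2 : ℝ) • nab u v) w = 2 * B (nab u v) w := by
    simp [smul_eq_mul]
  have h2 : B (∑ i, (B (J i u) v • e i - B (e i) v • J i u - B (e i) u • J i v)) w
      = ∑ i, (B (J i u) v * B (e i) w - B (e i) v * B (J i u) w
          - B (e i) u * B (J i v) w) := by
    simp [smul_eq_mul]
  rw [h1, h2, hk, key u v w, key v w u,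
    show (⁅w, u⁆ : g) = -⁅u, w⁆ by rw [← lie_skew]]
  simp only [map_neg, LinearMap.neg_apply, key u w v]
  rw [← Finset.sum_neg_distrib, ← Finset.sum_sub_distrib, ← Finset.sum_add_distrib]
  apply Finset.sum_congr rfl
  intro i _
  rw [hJ i u v, hJ i u w, hJ i v w]
  ring
end ArrowBreakingPaper
end

section
/- Let (g,⟨·,·⟩) be a finite-dimensional real Lie algebra with a nondegenerate symmetric bilinear form. Fix a basis {e_1,…,e_p} of g' = [g,g] and elements x_1,…,x_p ∈ g with ⟨e_i,x_j⟩ = δ_{ij}, and define J_i ∈ End(g) by ⟨J_i u, v⟩ = ⟨[u,v], x_i⟩. Then for all u,v,w ∈ g the curvature tensor satisfies: R(u,v)w = Σ_{i,j=1}^p ⟨e_i,e_j⟩ ( (1/4)⟨J_i v,w⟩ J_j u − (1/4)⟨J_i u,w⟩ J_j v − (1/2)⟨J_i u,v⟩ J_j w ) + (1/4) Σ_{i,j=1}^p ( ⟨e_i,w⟩⟨e_j,v⟩ J_j(J_i u) − ⟨e_i,w⟩⟨e_j,u⟩ J_j(J_i v) + ⟨e_i,u⟩⟨e_j,v⟩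 (J_j∘J_i − J_i∘J_j)(w) ) + (1/4) Σ_{i,j=1}^p ( ⟨e_i,w⟩⟨(J_j∘J_i − J_i∘J_j)(u), v⟩ + ⟨e_i,v⟩⟨J_j u, J_i w⟩ − ⟨e_i,u⟩⟨J_j v, J_i w⟩ ) e_j − (1/4)[w,[u,v]] + Σ_{j=1}^p ( −(1/2)⟨w,e_j⟩ J_j([u,v]) + (1/4)⟨e_j,u⟩ J_j([v,w]) − (1/4)⟨v,e_j⟩ J_j([u,w]) ) − (1/4) Σ_{j=1}^p ( ⟨[v,e_j],w⟩ + ⟨[w,e_j],v⟩ ) J_j u + (1/4) Σ_{j=1}^p ( ⟨[u,e_j],w⟩ + ⟨[w,e_j],u⟩ ) J_j v. -/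
open scoped BigOperators

namespace ArrowBreakingPaper

variable {ι : Type*} {g : Type*} [LieRing g] [LieAlgebra ℝ g]

theorem lie_sum' {κ : Type*} (x : g) (s : Finset κ) (f : κ → g) :
    ⁅x, ∑ i ∈ s, f i⁆ = ∑ i ∈ s, ⁅x, f i⁆ :=
  map_sum (AddMonoidHom.mk' (fun y => ⁅x, y⁆) (lie_add x)) f s

section aux
variable (B : LinearMap.BilinForm ℝ g) {p : ℕ} (e : Fin p → g) (x : Fin p → g)
  (J : Fin p → g →ₗ[ℝ] g)

theorem br_aux (hspan : Submodule.span ℝ (Set.range e) =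
      Submodule.span ℝ {z : g | ∃ u v : g, z = ⁅u, v⁆})
    (hx : ∀ i j, B (e i) (x j) = if i = j then 1 else 0)
    (hJ : ∀ i (u v : g), B (J i u) v = B ⁅u, v⁆ (x i)) :
    ∀ y z : g, ⁅y, z⁆ = ∑ i, B (J i y) z • e i := by
  intro y z
  have hmem : ⁅y, z⁆ ∈ Submodule.span ℝ (Set.range e) := by
    rw [hspan]; exact Submodule.subset_span ⟨y, z, rfl⟩
  rw [Submodule.mem_span_range_iff_exists_fun] at hmem
  obtain ⟨c, hc⟩ := hmem
  have hco : ∀ i, B (J i y) z = c i := by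
    intro i
    rw [hJ, ← hc, map_sum, LinearMap.sum_apply]
    simp [hx]
  rw [← hc]
  exact Finset.sum_congr rfl fun i _ => by rw [hco]

theorem skew_aux (hJ : ∀ i (u v : g), B (J i u) v = B ⁅u, v⁆ (x i)) :
    ∀ i (y z : g), B (J i y) z = -(B (J i z) y) := by
  intro i y z
  rw [hJ, hJ]
  have h : ⁅z, y⁆ = -⁅y, z⁆ := by rw [← lie_skew]
  rw [h, map_neg, LinearMap.neg_apply, neg_neg]

theorem nabf_aux (hsymm : IsSymm B) (hnd : Nondeg B)
    (hbr : ∀ y z : g, ⁅y, z⁆ = ∑ i, B (J i y) z • e i)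
    (hskew : ∀ i (y z : g), B (J i y) z = -(B (J i z) y))
    (nab : g → g → g) (hnab : IsLeviCivita B nab) :
    ∀ y z : g, nab y z = (1/2 : ℝ) • ⁅y, z⁆
      - ∑ i, ((1/2 * B (e i) y) • J i z + (1/2 * B (e i) z) • J i y) := by
  intro y z
  have key : ∀ w : g, B (nab y z
      - ((1/2 : ℝ) • ⁅y, z⁆
        - ∑ i, ((1/2 * B (e i) y) • J i z + (1/2 * B (e i) z) • J i y))) w = 0 := by
    intro w
    have h1 : 2 * B (nab y z) w = B ⁅y, z⁆ w - B ⁅z, w⁆ y + B ⁅w, y⁆ z := hnab y z w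
    have h2 : B ⁅z, w⁆ y = ∑ i, B (J i z) w * B (e i) y := by
      rw [hbr z w, map_sum, LinearMap.sum_apply]
      simp [hsymm _ y, mul_comm]
    have h3 : B ⁅w, y⁆ z = ∑ i, -(B (J i y) w) * B (e i) z := by
      rw [hbr w y, map_sum, LinearMap.sum_apply]
      refine Finset.sum_congr rfl fun i _ => ?_
      rw [LinearMap.map_smul₂, ← hskew]
      simp [hsymm _ z, mul_comm]
    simp only [map_sub, map_smul, map_sum, map_add, LinearMap.sub_apply,
      LinearMap.smul_apply, LinearMap.sum_apply, LinearMap.add_apply, smul_eq_mul]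
    rw [Finset.sum_add_distrib]
    have h4 : ∑ i, 1/2 * B (e i) y * B (J i z) w
        = 1/2 * ∑ i, B (J i z) w * B (e i) y := by
      rw [Finset.mul_sum]; exact Finset.sum_congr rfl fun i _ => by ring
    have h5 : ∑ i, 1/2 * B (e i) z * B (J i y) w
        = -(1/2) * ∑ i, -(B (J i y) w) * B (e i) z := by
      rw [Finset.mul_sum]; exact Finset.sum_congr rfl fun i _ => by ring
    rw [h4, h5, ← h2, ← h3]
    linarith
  exact sub_eq_zero.mp (hnd _ key)

end aux

set_option maxHeartbeats 8000000 in
/-- The curvature tensor of a metric Lie algebra in terms of the maps `J i`. -/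
theorem statement3 {g : Type*} [LieRing g] [LieAlgebra ℝ g]
    (B : LinearMap.BilinForm ℝ g) (hsymm : IsSymm B) (hnd : Nondeg B)
    {p : ℕ} (e : Fin p → g) (x : Fin p → g)
    (hind : LinearIndependent ℝ e)
    (hspan : Submodule.span ℝ (Set.range e) =
      Submodule.span ℝ {z : g | ∃ u v : g, z = ⁅u, v⁆})
    (hx : ∀ i j, B (e i) (x j) = if i = j then 1 else 0)
    (J : Fin p → g →ₗ[ℝ] g)
    (hJ : ∀ i (u v : g), B (J i u) v = B ⁅u, v⁆ (x i))
    (nab : g → g → g) (hnab : IsLeviCivita B nab) :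
    ∀ u v w : g, curv nab u v w =
      (∑ i, ∑ j, B (e i) (e j) •
          ((1/4 * B (J i v) w) • J j u - (1/4 * B (J i u) w) • J j v
            - (1/2 * B (J i u) v) • J j w))
      + (1/4 : ℝ) • (∑ i, ∑ j,
          ((B (e i) w * B (e j) v) • J j (J i u) - (B (e i) w * B (e j) u) • J j (J i v)
            + (B (e i) u * B (e j) v) • (J j (J i w) - J i (J j w))))
      + (1/4 : ℝ) • (∑ i, ∑ j,
          ((B (e i) w * B (J j (J i u) - J i (J j u)) v
            + B (e i) v * B (J j u) (J i w) - B (e i) u * B (J j v) (J i w)) • e j))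
      - (1/4 : ℝ) • ⁅w, ⁅u, v⁆⁆
      + (∑ j, ((-(1/2) * B w (e j)) • J j ⁅u, v⁆ + (1/4 * B (e j) u) • J j ⁅v, w⁆
            - (1/4 * B v (e j)) • J j ⁅u, w⁆))
      - (1/4 : ℝ) • (∑ j, (B ⁅v, e j⁆ w + B ⁅w, e j⁆ v) • J j u)
      + (1/4 : ℝ) • (∑ j, (B ⁅u, e j⁆ w + B ⁅w, e j⁆ u) • J j v) := by
  have hbr := br_aux B e x J hspan hx hJ
  have hskew := skew_aux B x J hJ
  have hN := nabf_aux B e J hsymm hnd hbr hskew nab hnab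
  intro u v w
  -- auxiliary rewriting lemmas
  have h1 : ∀ (a : g) (j : Fin p) (z : g),
      ⁅a, J j z⁆ = ∑ i, B (J i a) (J j z) • e i := fun a j z => hbr a (J j z)
  have h2 : ∀ (i : Fin p) (z w' : g), B (e i) ⁅z, w'⁆
      = ∑ j, B (J j z) w' * B (e i) (e j) := by
    intro i z w'
    rw [hbr z w', map_sum]
    simp [mul_comm]
  have h3 : ∀ (z : g) (j : Fin p) (t : g), B ⁅z, e j⁆ t
      = ∑ k, B (J k z) (e j) * B (e k) t := by
    intro z j t
    rw [hbr z (e j), map_sum, LinearMap.sum_apply]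
    simp
  have hJac : ⁅w, ⁅u, v⁆⁆ = ⁅v, ⁅u, w⁆⁆ - ⁅u, ⁅v, w⁆⁆ := by
    have h : ⁅w, ⁅u,v⁆⁆ = -⁅⁅u,v⁆, w⁆ := by rw [lie_skew]
    rw [h, lie_lie]; abel
  have hq : ∀ X : ℝ, 1/2*(1/2*X) = 1/4*X := fun X => by ring
  show nab ⁅u, v⁆ w - nab u (nab v w) + nab v (nab u w) = _
  simp only [hN]
  simp only [lie_lie, hJac, lie_sub, lie_smul, lie_sum', lie_add, h1,
    map_sub, map_smul, map_sum, map_add, smul_sub, smul_add, Finset.smul_sum,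
    smul_smul, smul_eq_mul, Finset.sum_sub_distrib, Finset.sum_add_distrib,
    h2, h3, Finset.sum_mul, Finset.mul_sum, Finset.sum_smul, mul_sub, mul_add,
    sub_smul, add_smul, neg_mul, neg_smul, smul_neg]
  simp only [mul_assoc, mul_comm, mul_left_comm]
  simp only [hq, show (1/2*(1/2) : ℝ) = 1/4 from by norm_num]
  have m1 : (∑ x : Fin p, ∑ x_1 : Fin p,
        (1/4 * (B (e x) (e x_1) * B (J x v) w)) • J x_1 u)
      = ∑ x : Fin p, ∑ x_1 : Fin p,
        (1/4 * (B (e x) (e x_1) * B (J x_1 v) w)) • J x u := by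
    rw [Finset.sum_comm]
    exact Finset.sum_congr rfl fun a _ => Finset.sum_congr rfl fun b _ => by
      rw [hsymm (e b) (e a)]
  have m2 : (∑ x : Fin p, ∑ x_1 : Fin p,
        (1/4 * (B (e x) (e x_1) * B (J x u) w)) • J x_1 v)
      = ∑ x : Fin p, ∑ x_1 : Fin p,
        (1/4 * (B (e x) (e x_1) * B (J x_1 u) w)) • J x v := by
    rw [Finset.sum_comm]
    exact Finset.sum_congr rfl fun a _ => Finset.sum_congr rfl fun b _ => by
      rw [hsymm (e b) (e a)]
  have m3 : (∑ x : Fin p, ∑ x_1 : Fin p,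
        (1/2 * (B (e x) (e x_1) * B (J x u) v)) • J x_1 w)
      = ∑ x : Fin p, ∑ x_1 : Fin p,
        (1/2 * (B (e x) (e x_1) * B (J x_1 u) v)) • J x w := by
    rw [Finset.sum_comm]
    exact Finset.sum_congr rfl fun a _ => Finset.sum_congr rfl fun b _ => by
      rw [hsymm (e b) (e a)]
  have m4 : (∑ x : Fin p, ∑ x_1 : Fin p,
        (1/4 * (B (e x) u * B (e x_1) v)) • J x_1 (J x w))
      = ∑ x : Fin p, ∑ x_1 : Fin p,
        (1/4 * (B (e x) v * B (e x_1) u)) • J x (J x_1 w) := by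
    rw [Finset.sum_comm]
    exact Finset.sum_congr rfl fun a _ => Finset.sum_congr rfl fun b _ => by
      rw [mul_comm (B (e b) u) (B (e a) v)]
  have m5 : (∑ x : Fin p, ∑ x_1 : Fin p,
        (1/4 * (B (e x) w * B (e x_1) u)) • J x_1 (J x v))
      = ∑ x : Fin p, ∑ x_1 : Fin p,
        (1/4 * (B (e x) u * B (e x_1) w)) • J x (J x_1 v) := by
    rw [Finset.sum_comm]
    exact Finset.sum_congr rfl fun a _ => Finset.sum_congr rfl fun b _ => by
      rw [mul_comm (B (e b) w) (B (e a) u)]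
  have m6 : (∑ x : Fin p, ∑ x_1 : Fin p,
        (1/4 * (B (e x) w * B (e x_1) v)) • J x_1 (J x u))
      = ∑ x : Fin p, ∑ x_1 : Fin p,
        (1/4 * (B (e x) v * B (e x_1) w)) • J x (J x_1 u) := by
    rw [Finset.sum_comm]
    exact Finset.sum_congr rfl fun a _ => Finset.sum_congr rfl fun b _ => by
      rw [mul_comm (B (e b) w) (B (e a) v)]
  have m7 : (∑ x : Fin p, ∑ x_1 : Fin p,
        (1/4 * (B (e x) w * (B (J x_1 (J x u)) - B (J x (J x_1 u))) v)) • e x_1)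
      = (∑ x : Fin p, ∑ x_1 : Fin p, (1/4 * (B (e x) w * B (J x_1 u) (J x v))) • e x_1)
        - ∑ x : Fin p, ∑ x_1 : Fin p,
            (1/4 * (B (e x) w * B (J x_1 v) (J x u))) • e x_1 := by
    have key : ∀ a b : Fin p,
        (1/4 * (B (e a) w * (B (J b (J a u)) - B (J a (J b u))) v)) • e b
        = (1/4 * (B (e a) w * B (J b u) (J a v))) • e b
          - (1/4 * (B (e a) w * B (J b v) (J a u))) • e b := by
      intro a b
      rw [← sub_smul]
      congr 1
      rw [LinearMap.sub_apply, hskew b ((J a) u) v, hskew a ((J b) u) v,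
        hsymm ((J a) v) ((J b) u)]
      ring
    simp only [key, Finset.sum_sub_distrib]
  have m8 : (∑ x : Fin p, -((1/2 * B w (e x)) • J x ⁅u, v⁆))
      = -∑ x : Fin p, (1/2 * B (e x) w) • J x ⁅u, v⁆ := by
    rw [← Finset.sum_neg_distrib]
    exact Finset.sum_congr rfl fun a _ => by rw [hsymm w (e a)]
  have m9 : (∑ x : Fin p, (1/4 * B v (e x)) • J x ⁅u, w⁆)
      = ∑ x : Fin p, (1/4 * B (e x) v) • J x ⁅u, w⁆ :=
    Finset.sum_congr rfl fun a _ => by rw [hsymm v (e a)]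
  have m10 : (∑ x : Fin p, ∑ x_1 : Fin p,
        (1/4 * (B (e x_1) w * B (J x_1 v) (e x))) • J x u)
      = ∑ x : Fin p, ∑ x_1 : Fin p,
        (1/4 * (B (e x) (J x_1 v) * B (e x_1) w)) • J x u :=
    Finset.sum_congr rfl fun a _ => Finset.sum_congr rfl fun b _ => by
      rw [hsymm ((J b) v) (e a), mul_comm (B (e b) w) (B (e a) ((J b) v))]
  have m11 : (∑ x : Fin p, ∑ x_1 : Fin p,
        (1/4 * (B (e x_1) v * B (J x_1 w) (e x))) • J x u)
      = ∑ x : Fin p, ∑ x_1 : Fin p,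
        (1/4 * (B (e x) (J x_1 w) * B (e x_1) v)) • J x u :=
    Finset.sum_congr rfl fun a _ => Finset.sum_congr rfl fun b _ => by
      rw [hsymm ((J b) w) (e a), mul_comm (B (e b) v) (B (e a) ((J b) w))]
  have m12 : (∑ x : Fin p, ∑ x_1 : Fin p,
        (1/4 * (B (e x_1) w * B (J x_1 u) (e x))) • J x v)
      = ∑ x : Fin p, ∑ x_1 : Fin p,
        (1/4 * (B (e x) (J x_1 u) * B (e x_1) w)) • J x v :=
    Finset.sum_congr rfl fun a _ => Finset.sum_congr rfl fun b _ => by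
      rw [hsymm ((J b) u) (e a), mul_comm (B (e b) w) (B (e a) ((J b) u))]
  have m13 : (∑ x : Fin p, ∑ x_1 : Fin p,
        (1/4 * (B (e x_1) u * B (J x_1 w) (e x))) • J x v)
      = ∑ x : Fin p, ∑ x_1 : Fin p,
        (1/4 * (B (e x) (J x_1 w) * B (e x_1) u)) • J x v :=
    Finset.sum_congr rfl fun a _ => Finset.sum_congr rfl fun b _ => by
      rw [hsymm ((J b) w) (e a), mul_comm (B (e b) u) (B (e a) ((J b) w))]
  have hs1 : (1/2 : ℝ) • ⁅u, ⁅v, w⁆⁆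
      = (1/4 : ℝ) • ⁅u, ⁅v, w⁆⁆ + (1/4 : ℝ) • ⁅u, ⁅v, w⁆⁆ := by
    rw [← add_smul]; norm_num
  have hs2 : (1/2 : ℝ) • ⁅v, ⁅u, w⁆⁆
      = (1/4 : ℝ) • ⁅v, ⁅u, w⁆⁆ + (1/4 : ℝ) • ⁅v, ⁅u, w⁆⁆ := by
    rw [← add_smul]; norm_num
  rw [m1, m2, m3, m4, m5, m6, m7, m8, m9, m10, m11, m12, m13, hs1, hs2]
  abel


end ArrowBreakingPaper
end

section
/- Let g be a finite-dimensional real nilpotent Lie algebra with a nice basis {e_1,…,e_n}, and let σ be an order-two permutation of the basis. Suppose there are indices s,t such that there is no index k satisfying both e_s →^{e_k} e_{σ(s)} and e_t →^{e_{σ(k)}} e_{σ(t)}. Assume that at least one of the following holds: (C1) there is an index k₁ fixed by σ with e_s →^{e_t} e_{k₁}, and there is no arrow of the form e_t →^{e_l} e_{σ(s)} for any l, and no arrow of the form e_s →^{e_l} e_{σ(t)} for any l; or (C2) there is an index k₂ fixed by σ with e_s →^{e_{k₂}} e_{σ(t)}, and [e_s,e_t] = 0, and there is no arrow of the form e_t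 →^{e_l} e_{σ(s)} for any l. Then every σ-diagonal metric on g is not flat. -/
open scoped BigOperators

namespace ArrowBreakingPaper

variable {ι : Type*} {g : Type*} [LieRing g] [LieAlgebra ℝ g]

/-- Non-flatness criteria for `σ`-diagonal metrics on nice nilpotent Lie
algebras. -/
theorem statement4 {n : ℕ} {g : Type*} [LieRing g] [LieAlgebra ℝ g]
    [LieRing.IsNilpotent g]
    (e : Module.Basis (Fin n) ℝ g) (hnice : IsNiceBasis e)
    (σ : Equiv.Perm (Fin n)) (hσ : ∀ i, σ (σ i) = i)
    (s t : Fin n)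
    (hnok : ¬ ∃ k, Arrow (⇑e) s k (σ s) ∧ Arrow (⇑e) t (σ k) (σ t))
    (hC : (∃ k₁, σ k₁ = k₁ ∧ Arrow (⇑e) s t k₁ ∧
            (∀ l, ¬ Arrow (⇑e) t l (σ s)) ∧ (∀ l, ¬ Arrow (⇑e) s l (σ t))) ∨
          (∃ k₂, σ k₂ = k₂ ∧ Arrow (⇑e) s k₂ (σ t) ∧ ⁅e s, e t⁆ = 0 ∧
            (∀ l, ¬ Arrow (⇑e) t l (σ s)))) :
    ∀ B : LinearMap.BilinForm ℝ g, IsSymm B → Nondeg B → IsSigmaDiagonal e σ B →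
      ¬ IsFlat B := by
  classical
  rintro B hsymm hnd ⟨gv, hgv0, hgvσ, hB⟩ ⟨nab, hkos, hcurv⟩
  have skw : ∀ a b : g, ⁅a, b⁆ = -⁅b, a⁆ := fun a b => (lie_skew a b).symm
  have hBe : ∀ i k, B (e i) (e k) = if i = σ k then gv i else 0 := by
    intro i k
    have h := hB i (σ k)
    rwa [hσ] at h
  have hBx : ∀ (x : g) (k : Fin n), B x (e k) = gv k * e.repr x (σ k) := by
    intro x k
    conv_lhs => rw [← e.sum_repr x]
    simp only [map_sum, LinearMap.sum_apply, map_smul, LinearMap.smul_apply, smul_eq_mul, hBe,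
      mul_ite, mul_zero]
    rw [Finset.sum_ite_eq' Finset.univ (σ k) (fun i => e.repr x i * gv i)]
    simp [hgvσ, mul_comm]
  have harrow : ∀ i j k : Fin n, e.repr ⁅e i, e j⁆ k ≠ 0 → Arrow (⇑e) i j k := by
    intro i j k hne
    obtain ⟨k', c', h⟩ := hnice.1 i j
    rw [h] at hne
    simp only [map_smul, Module.Basis.repr_self, Finsupp.smul_single, smul_eq_mul, mul_one,
      Finsupp.single_apply] at hne
    by_cases hk : k' = k
    · subst hk
      simp at hne
      exact ⟨c', hne, h⟩
    · simp [hk] at hne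
  have hnok' : ∀ m : Fin n,
      e.repr ⁅e s, e m⁆ (σ s) = 0 ∨ e.repr ⁅e t, e (σ m)⁆ (σ t) = 0 := by
    intro m
    by_contra h
    push_neg at h
    exact hnok ⟨m, harrow _ _ _ h.1, harrow _ _ _ h.2⟩
  -- coefficients of X = nab (e t) (e t)
  have hXm : ∀ m : Fin n,
      gv m * e.repr (nab (e t) (e t)) m = -(gv t * e.repr ⁅e t, e (σ m)⁆ (σ t)) := by
    intro m
    have h1 := hkos (e t) (e t) (e (σ m))
    rw [lie_self] at h1
    rw [skw (e (σ m)) (e t)] at h1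
    simp only [map_zero, LinearMap.zero_apply, map_neg, LinearMap.neg_apply] at h1
    simp only [hBx] at h1
    rw [hσ, hgvσ] at h1
    linarith
  have hterm2 : B (nab (e s) (nab (e t) (e t))) (e s) = 0 := by
    have h1 := hkos (e s) (nab (e t) (e t)) (e s)
    rw [skw (nab (e t) (e t)) (e s), lie_self] at h1
    simp only [map_neg, LinearMap.neg_apply, map_zero, LinearMap.zero_apply] at h1
    have hz : B ⁅e s, nab (e t) (e t)⁆ (e s) = 0 := by
      have hexp := map_sum (LieAlgebra.ad ℝ g (e s))
        (fun m => e.repr (nab (e t) (e t)) m • e m) Finset.univ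
      simp only [LieAlgebra.ad_apply, map_smul] at hexp
      rw [e.sum_repr (nab (e t) (e t))] at hexp
      rw [hexp, map_sum, LinearMap.sum_apply]
      apply Finset.sum_eq_zero
      intro m _
      simp only [map_smul, LinearMap.smul_apply, smul_eq_mul]
      rcases hnok' m with h | h
      · rw [hBx, h]
        ring
      · have hxm := hXm m
        rw [h, mul_zero, neg_zero, mul_eq_zero] at hxm
        rcases hxm with h' | h'
        · exact absurd h' (hgv0 m)
        · rw [h']
          ring
    rw [hz] at h1
    linarith
  have h0 : B (curv nab (e s) (e t) (e t)) (e s) = 0 := by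
    rw [hcurv]
    simp
  rw [curv] at h0
  simp only [map_add, map_sub, LinearMap.add_apply, LinearMap.sub_apply] at h0
  rw [hterm2] at h0
  rcases hC with ⟨k₁, hk₁σ, ⟨c, hc0, hcE⟩, hts, hst⟩ |
    ⟨k₂, hk₂σ, ⟨c, hc0, hcE⟩, hlie0, hts⟩
  · -- Case C1
    have hts' : ∀ k, e.repr ⁅e t, e k⁆ (σ s) = 0 := by
      intro k
      by_contra h
      exact hts k (harrow _ _ _ h)
    have hst' : ∀ k, e.repr ⁅e s, e k⁆ (σ t) = 0 := by
      intro k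
      by_contra h
      exact hst k (harrow _ _ _ h)
    have hYk : ∀ k, B (nab (e s) (e t)) (e k) = B ((c / 2) • e k₁) (e k) := by
      intro k
      have h1 := hkos (e s) (e t) (e k)
      rw [hcE] at h1
      have e1 : B ⁅e t, e k⁆ (e s) = 0 := by rw [hBx, hts', mul_zero]
      have e2 : B ⁅e k, e s⁆ (e t) = 0 := by
        rw [skw (e k) (e s)]
        simp only [map_neg, LinearMap.neg_apply]
        rw [hBx, hst', mul_zero, neg_zero]
      rw [e1, e2] at h1
      simp only [map_smul, LinearMap.smul_apply, smul_eq_mul] at h1 ⊢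
      linarith
    have hY : nab (e s) (e t) = (c / 2) • e k₁ := by
      have hD : ∀ w : g, B (nab (e s) (e t) - (c / 2) • e k₁) w = 0 := by
        intro w
        conv_lhs => rw [← e.sum_repr w]
        rw [map_sum]
        apply Finset.sum_eq_zero
        intro m _
        rw [map_smul, smul_eq_mul, map_sub, LinearMap.sub_apply, hYk, sub_self, mul_zero]
      have hD0 := hnd _ hD
      rwa [sub_eq_zero] at hD0
    rw [hcE] at h0
    have hA : 2 * B (nab (c • e k₁) (e t)) (e s) = c * c * gv k₁ := by
      have h1 := hkos (c • e k₁) (e t) (e s)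
      rw [smul_lie] at h1
      have e1 : B ⁅e k₁, e t⁆ (e s) = 0 := by
        rw [skw (e k₁) (e t)]
        simp only [map_neg, LinearMap.neg_apply]
        rw [hBx, hts', mul_zero, neg_zero]
      have e2 : B ⁅e t, e s⁆ (e k₁) = -(c * gv k₁) := by
        rw [skw (e t) (e s), hcE]
        simp only [map_neg, map_smul, LinearMap.neg_apply, LinearMap.smul_apply, smul_eq_mul]
        rw [hBe]
        rw [hk₁σ]
        simp
      have e3 : B ⁅e s, e k₁⁆ (e t) = 0 := by rw [hBx, hst', mul_zero]
      simp only [lie_smul, map_smul, LinearMap.smul_apply, smul_eq_mul, e1, e2, e3] at h1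
      linear_combination h1
    have hT3 : 2 * B (nab (e t) ((c / 2) • e k₁)) (e s) = c * c * gv k₁ / 2 := by
      have h1 := hkos (e t) ((c / 2) • e k₁) (e s)
      have e1 : B ⁅e t, e k₁⁆ (e s) = 0 := by rw [hBx, hts', mul_zero]
      have e2 : B ⁅e k₁, e s⁆ (e t) = 0 := by
        rw [skw (e k₁) (e s)]
        simp only [map_neg, LinearMap.neg_apply]
        rw [hBx, hst', mul_zero, neg_zero]
      have e3 : B ⁅e s, e t⁆ (e k₁) = c * gv k₁ := by
        rw [hcE]
        simp only [map_smul, LinearMap.smul_apply, smul_eq_mul]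
        rw [hBe, hk₁σ]
        simp
      rw [lie_smul, smul_lie] at h1
      simp only [map_smul, LinearMap.smul_apply, smul_eq_mul, e1, e2, e3] at h1
      linear_combination h1
    rw [hY] at h0
    have hfin : c * c * gv k₁ = 0 := by linarith
    exact (mul_ne_zero (mul_ne_zero hc0 hc0) (hgv0 k₁)) hfin
  · -- Case C2
    have hts' : ∀ k, e.repr ⁅e t, e k⁆ (σ s) = 0 := by
      intro k
      by_contra h
      exact hts k (harrow _ _ _ h)
    have hk₂c : e.repr ⁅e s, e k₂⁆ (σ t) = c := by
      rw [hcE]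
      simp [Module.Basis.repr_self]
    have hrepr : ∀ k, e.repr ⁅e s, e k⁆ (σ t) = if k = k₂ then c else 0 := by
      intro k
      by_cases hk : k = k₂
      · subst hk
        simp [hk₂c]
      · simp only [hk, if_false]
        by_contra h
        exact hk (hnice.2 s (σ t) k k₂ h (hk₂c ▸ hc0))
    set a : ℝ := -(gv t) * c / (2 * gv k₂) with ha
    have hYk : ∀ k, B (nab (e s) (e t)) (e k) = B (a • e k₂) (e k) := by
      intro k
      have h1 := hkos (e s) (e t) (e k)
      rw [hlie0] at h1
      have e1 : B ⁅e t, e k⁆ (e s) = 0 := by rw [hBx, hts', mul_zero]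
      have e2 : B ⁅e k, e s⁆ (e t) = -(gv t * (if k = k₂ then c else 0)) := by
        rw [skw (e k) (e s)]
        simp only [map_neg, LinearMap.neg_apply]
        rw [hBx, hrepr]
      simp only [map_zero, LinearMap.zero_apply, e1, e2] at h1
      simp only [map_smul, LinearMap.smul_apply, smul_eq_mul]
      rw [hBe]
      by_cases hk : k = k₂
      · rw [hk] at h1 ⊢
        rw [hk₂σ]
        simp only [eq_self_iff_true, if_true] at h1 ⊢
        have hg : gv k₂ ≠ 0 := hgv0 k₂
        have hval : a * gv k₂ = -(gv t * c) / 2 := by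
          rw [ha]
          field_simp
        rw [hval]
        linarith
      · have hne : ¬ k₂ = σ k := by
          intro hcon
          have h2 : σ k₂ = k := by rw [hcon, hσ]
          exact hk (h2.symm.trans hk₂σ)
        simp only [if_neg hk, if_neg hne, mul_zero, neg_zero] at h1 ⊢
        linarith
    have hY : nab (e s) (e t) = a • e k₂ := by
      have hD : ∀ w : g, B (nab (e s) (e t) - a • e k₂) w = 0 := by
        intro w
        conv_lhs => rw [← e.sum_repr w]
        rw [map_sum]
        apply Finset.sum_eq_zero
        intro m _
        rw [map_smul, smul_eq_mul, map_sub, LinearMap.sub_apply, hYk, sub_self, mul_zero]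
      have hD0 := hnd _ hD
      rwa [sub_eq_zero] at hD0
    rw [hlie0] at h0
    have hA : B (nab (0 : g) (e t)) (e s) = 0 := by
      have h1 := hkos (0 : g) (e t) (e s)
      simp only [zero_lie, lie_zero, map_zero, LinearMap.zero_apply] at h1
      linarith
    have hT3 : 2 * B (nab (e t) (a • e k₂)) (e s) = a * (c * gv t) := by
      have h1 := hkos (e t) (a • e k₂) (e s)
      have e1 : B ⁅e t, e k₂⁆ (e s) = 0 := by rw [hBx, hts', mul_zero]
      have e2 : B ⁅e k₂, e s⁆ (e t) = -(c * gv t) := by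
        rw [skw (e k₂) (e s), hcE]
        simp only [map_neg, map_smul, LinearMap.neg_apply, LinearMap.smul_apply, smul_eq_mul]
        rw [hBe]
        simp [hgvσ]
      rw [lie_smul, smul_lie, hlie0] at h1
      simp only [map_smul, LinearMap.smul_apply, smul_eq_mul, e1, e2, map_zero,
        LinearMap.zero_apply, mul_zero] at h1
      linear_combination h1
    rw [hY, hA] at h0
    have hfin : a * (c * gv t) = 0 := by linarith
    have ha0 : a ≠ 0 := by
      rw [ha]
      exact div_ne_zero (mul_ne_zero (neg_ne_zero.mpr (hgv0 t)) hc0)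
        (mul_ne_zero two_ne_zero (hgv0 k₂))
    exact (mul_ne_zero ha0 (mul_ne_zero hc0 (hgv0 t))) hfin

end ArrowBreakingPaper
end

section
/- Let g be a finite-dimensional real nilpotent Lie algebra with a nice basis {e_1,…,e_n}. In the polynomial ring ℤ[X_1,…,X_n], define P = Π (X_i + X_j), the product over all pairs i < j such that e_i →^{e_j} e_k for some k, and Q = Π (1 + X_i − X_k), the product over all triples (i,j,k) such that e_i →^{e_j} e_k; a permutation σ of {1,…,n} acts on ℤ[X_1,…,X_n] by permuting the variables. Then for an order-two permutation σ of the basis, the following are equivalent: (1) σ is an arrow-breaking involution; (2) P and σ·P have no common divisor of degree one, and Q and σ·Q have no common divisor of degree one; (3) neither P nor Q has a σ-invariant divisor of positive degree. -/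
open scoped BigOperators

namespace ArrowBreakingPaper

variable {ι : Type*} {g : Type*} [LieRing g] [LieAlgebra ℝ g]

open Classical in
/-- The polynomial `P_Δ = ∏_{i →^j k, i < j} (Xᵢ + Xⱼ)`. -/
noncomputable def Ppoly {g : Type*} [LieRing g] [LieAlgebra ℝ g] {n : ℕ}
    (e : Fin n → g) : MvPolynomial (Fin n) ℤ :=
  ∏ p : Fin n × Fin n,
    if p.1 < p.2 ∧ ∃ k, Arrow e p.1 p.2 k
    then MvPolynomial.X p.1 + MvPolynomial.X p.2 else 1

open Classical in
/-- The polynomial `Q_Δ = ∏_{i →^j k} (1 + Xᵢ − X_k)`. -/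
noncomputable def Qpoly {g : Type*} [LieRing g] [LieAlgebra ℝ g] {n : ℕ}
    (e : Fin n → g) : MvPolynomial (Fin n) ℤ :=
  ∏ t : Fin n × Fin n × Fin n,
    if Arrow e t.1 t.2.1 t.2.2
    then 1 + MvPolynomial.X t.1 - MvPolynomial.X t.2.2 else 1

/-! ### Auxiliary machinery for Statement 5 -/

section Statement5Aux

open MvPolynomial

/-! #### Lie-algebra side lemmas about arrows -/

lemma Arrow.symm {e : ι → g} {i j k : ι} (h : Arrow e i j k) : Arrow e j i k := by
  obtain ⟨c, hc, h⟩ := h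
  exact ⟨-c, neg_ne_zero.mpr hc, by rw [← lie_skew, h, neg_smul]⟩

lemma Arrow.ne_src {e : Module.Basis ι ℝ g} {i j k : ι} (h : Arrow (⇑e) i j k) : i ≠ j := by
  rintro rfl
  obtain ⟨c, hc, h⟩ := h
  rw [lie_self] at h
  rcases smul_eq_zero.mp h.symm with h' | h'
  · exact hc h'
  · exact e.ne_zero k h'

lemma eigen_ne [LieRing.IsNilpotent g] {x : g} {v : g} (hv : v ≠ 0) {c : ℝ} (hc : c ≠ 0)
    (h : ⁅x, v⁆ = c • v) : False := by
  obtain ⟨N, hN⟩ := LieAlgebra.nilpotent_ad_of_nilpotent_algebra ℝ g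
  have key : ∀ m : ℕ, (LieAlgebra.ad ℝ g x ^ m) v = (c ^ m) • v := by
    intro m
    induction m with
    | zero => simp
    | succ m ih =>
      rw [pow_succ', Module.End.mul_apply, LieAlgebra.ad_apply, ih, lie_smul, h, smul_smul,
        ← pow_succ]
  have h0 := key N
  rw [hN x, LinearMap.zero_apply] at h0
  rcases smul_eq_zero.mp h0.symm with h' | h'
  · rcases pow_eq_zero_iff'.mp h' with ⟨h'', -⟩
    exact hc h''
  · exact hv h'

lemma Arrow.ne_tgt [LieRing.IsNilpotent g] {e : Module.Basis ι ℝ g} {i j k : ι}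
    (h : Arrow (⇑e) i j k) : j ≠ k := by
  rintro rfl
  obtain ⟨c, hc, h⟩ := h
  exact eigen_ne (e.ne_zero j) hc h

/-! #### Generalities on multivariate polynomials over `ℤ` -/

lemma isUnit_eq_C : ∀ {n : ℕ} (f : MvPolynomial (Fin n) ℤ), IsUnit f → ∃ c : ℤ, f = C c
  | 0, f, _ => ⟨_, eq_C_of_isEmpty f⟩
  | (n+1), f, hf => by
    have h2 : IsUnit (finSuccEquiv ℤ n f) := hf.map _
    obtain ⟨r, hr, hrf⟩ := Polynomial.isUnit_iff.mp h2
    obtain ⟨c, rfl⟩ := isUnit_eq_C r hr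
    refine ⟨c, ?_⟩
    have h3 := congrArg (finSuccEquiv ℤ n).symm hrf
    rw [AlgEquiv.symm_apply_apply] at h3
    rw [← h3]
    exact (RingHom.congr_fun (finSuccEquiv_comp_C_eq_C n) c).symm ▸ rfl

lemma not_isUnit_of_pos {n : ℕ} {f : MvPolynomial (Fin n) ℤ} (h : 0 < f.totalDegree) :
    ¬ IsUnit f := by
  intro hu
  obtain ⟨c, rfl⟩ := isUnit_eq_C f hu
  rw [MvPolynomial.totalDegree_C] at h
  exact Nat.lt_irrefl 0 h

lemma sub_aeval_mem {n : ℕ} (τ : Fin n → MvPolynomial (Fin n) ℤ) (p : MvPolynomial (Fin n) ℤ)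
    (hτ : ∀ l, X l - τ l ∈ Ideal.span {p}) (f : MvPolynomial (Fin n) ℤ) :
    f - aeval τ f ∈ Ideal.span {p} := by
  induction f using MvPolynomial.induction_on with
  | C a => simp [MvPolynomial.algebraMap_eq]
  | add f g hf hg =>
    have h := Ideal.add_mem _ hf hg
    have heq : f + g - aeval τ (f + g) = (f - aeval τ f) + (g - aeval τ g) := by
      rw [map_add]; ring
    rw [heq]; exact h
  | mul_X f l hf =>
    have heq : f * X l - aeval τ (f * X l)
        = (f - aeval τ f) * X l + aeval τ f * (X l - τ l) := by
      rw [map_mul, aeval_X]; ring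
    rw [heq]
    exact Ideal.add_mem _ (Ideal.mul_mem_right _ _ hf) (Ideal.mul_mem_left _ _ (hτ l))

lemma dvd_iff_aeval {n : ℕ} (τ : Fin n → MvPolynomial (Fin n) ℤ) (p : MvPolynomial (Fin n) ℤ)
    (hτ : ∀ l, X l - τ l ∈ Ideal.span {p}) (hp : aeval τ p = 0) (f : MvPolynomial (Fin n) ℤ) :
    p ∣ f ↔ aeval τ f = 0 := by
  constructor
  · rintro ⟨g, rfl⟩; rw [map_mul, hp, zero_mul]
  · intro h
    have h2 := sub_aeval_mem τ p hτ f
    rw [h, sub_zero] at h2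
    exact (Ideal.mem_span_singleton).mp h2

noncomputable def tauP {n : ℕ} (a b : Fin n) : Fin n → MvPolynomial (Fin n) ℤ :=
  fun l => if l = a then - X b else X l

noncomputable def tauQ {n : ℕ} (a c : Fin n) : Fin n → MvPolynomial (Fin n) ℤ :=
  fun l => if l = c then 1 + X a else X l

lemma tauP_spec1 {n : ℕ} {a b : Fin n} (l : Fin n) :
    X l - tauP a b l ∈ Ideal.span {(X a + X b : MvPolynomial (Fin n) ℤ)} := by
  by_cases h : l = a
  · subst h
    rw [tauP, if_pos rfl, sub_neg_eq_add]
    exact Ideal.mem_span_singleton_self _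
  · rw [tauP, if_neg h, sub_self]
    exact Ideal.zero_mem _

lemma tauP_spec2 {n : ℕ} {a b : Fin n} (hab : a ≠ b) :
    aeval (tauP a b) (X a + X b : MvPolynomial (Fin n) ℤ) = 0 := by
  rw [map_add, aeval_X, aeval_X]
  simp only [tauP]
  rw [if_pos trivial, if_neg (show ¬ b = a from fun h => hab h.symm)]
  ring

lemma dvd_iff_P {n : ℕ} {a b : Fin n} (hab : a ≠ b) (f : MvPolynomial (Fin n) ℤ) :
    (X a + X b : MvPolynomial (Fin n) ℤ) ∣ f ↔ aeval (tauP a b) f = 0 :=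
  dvd_iff_aeval _ _ tauP_spec1 (tauP_spec2 hab) f

lemma tauQ_spec1 {n : ℕ} {a c : Fin n} (l : Fin n) :
    X l - tauQ a c l ∈ Ideal.span {(1 + X a - X c : MvPolynomial (Fin n) ℤ)} := by
  by_cases h : l = c
  · rw [tauQ, if_pos h, h, show (X c - (1 + X a) : MvPolynomial (Fin n) ℤ)
      = (-1) * (1 + X a - X c) by ring]
    exact Ideal.mul_mem_left _ _ (Ideal.mem_span_singleton_self _)
  · rw [tauQ, if_neg h, sub_self]
    exact Ideal.zero_mem _

lemma tauQ_spec2 {n : ℕ} {a c : Fin n} (hac : a ≠ c) :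
    aeval (tauQ a c) (1 + X a - X c : MvPolynomial (Fin n) ℤ) = 0 := by
  rw [map_sub, map_add, map_one, aeval_X, aeval_X, tauQ, tauQ, if_pos rfl, if_neg hac]
  ring

lemma dvd_iff_Q {n : ℕ} {a c : Fin n} (hac : a ≠ c) (f : MvPolynomial (Fin n) ℤ) :
    (1 + X a - X c : MvPolynomial (Fin n) ℤ) ∣ f ↔ aeval (tauQ a c) f = 0 :=
  dvd_iff_aeval _ _ tauQ_spec1 (tauQ_spec2 hac) f

lemma coeffP {n : ℕ} {a b : Fin n} (hab : a ≠ b) :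
    coeff (Finsupp.single a 1) (X a + X b : MvPolynomial (Fin n) ℤ) = 1 := by
  rw [coeff_add, coeff_X', coeff_X', if_pos rfl,
    if_neg (by rw [Finsupp.single_left_inj (one_ne_zero (α := ℕ))]; exact Ne.symm hab)]
  norm_num

lemma P_ne_zero {n : ℕ} {a b : Fin n} (hab : a ≠ b) :
    (X a + X b : MvPolynomial (Fin n) ℤ) ≠ 0 := by
  intro h
  have h2 := congrArg (coeff (Finsupp.single a 1)) h
  rw [coeffP hab, coeff_zero] at h2
  exact one_ne_zero h2

lemma coeffQ {n : ℕ} {a c : Fin n} (hac : a ≠ c) :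
    coeff (Finsupp.single a 1) (1 + X a - X c : MvPolynomial (Fin n) ℤ) = 1 := by
  rw [coeff_sub, coeff_add, coeff_X', coeff_X', if_pos rfl, coeff_one,
    if_neg (show ¬ (0 : Fin n →₀ ℕ) = Finsupp.single a 1 from
      fun h => one_ne_zero (Finsupp.single_eq_zero.mp h.symm)),
    if_neg (by rw [Finsupp.single_left_inj (one_ne_zero (α := ℕ))]; exact Ne.symm hac)]
  norm_num

lemma Q_ne_zero {n : ℕ} {a c : Fin n} (hac : a ≠ c) :
    (1 + X a - X c : MvPolynomial (Fin n) ℤ) ≠ 0 := by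
  intro h
  have h2 := congrArg (coeff (Finsupp.single a 1)) h
  rw [coeffQ hac, coeff_zero] at h2
  exact one_ne_zero h2

lemma prime_P {n : ℕ} {a b : Fin n} (hab : a ≠ b) :
    Prime (X a + X b : MvPolynomial (Fin n) ℤ) := by
  refine ⟨P_ne_zero hab, ?_, ?_⟩
  · intro hu
    have h2 := hu.map (aeval (tauP a b))
    rw [tauP_spec2 hab] at h2
    exact zero_ne_one (isUnit_zero_iff.mp h2)
  · intro x y h
    rw [dvd_iff_P hab] at h
    rw [map_mul] at h
    rcases mul_eq_zero.mp h with h' | h'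
    · exact Or.inl ((dvd_iff_P hab x).mpr h')
    · exact Or.inr ((dvd_iff_P hab y).mpr h')

lemma prime_Q {n : ℕ} {a c : Fin n} (hac : a ≠ c) :
    Prime (1 + X a - X c : MvPolynomial (Fin n) ℤ) := by
  refine ⟨Q_ne_zero hac, ?_, ?_⟩
  · intro hu
    have h2 := hu.map (aeval (tauQ a c))
    rw [tauQ_spec2 hac] at h2
    exact zero_ne_one (isUnit_zero_iff.mp h2)
  · intro x y h
    rw [dvd_iff_Q hac] at h
    rw [map_mul] at h
    rcases mul_eq_zero.mp h with h' | h'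
    · exact Or.inl ((dvd_iff_Q hac x).mpr h')
    · exact Or.inr ((dvd_iff_Q hac y).mpr h')

lemma P_not_dvd_C {n : ℕ} {a b : Fin n} (hab : a ≠ b) {c : ℤ} (hc : c ≠ 0) :
    ¬ (X a + X b : MvPolynomial (Fin n) ℤ) ∣ C c := by
  intro h
  rw [dvd_iff_P hab, aeval_C] at h
  exact hc (by rwa [MvPolynomial.algebraMap_eq, MvPolynomial.C_eq_zero] at h)

lemma Q_not_dvd_C {n : ℕ} {a c' : Fin n} (hac : a ≠ c') {c : ℤ} (hc : c ≠ 0) :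
    ¬ (1 + X a - X c' : MvPolynomial (Fin n) ℤ) ∣ C c := by
  intro h
  rw [dvd_iff_Q hac, aeval_C] at h
  exact hc (by rwa [MvPolynomial.algebraMap_eq, MvPolynomial.C_eq_zero] at h)

/-! #### Monomials of linear polynomials -/

lemma monomial_classify {n : ℕ} (m : Fin n →₀ ℕ) (h : ∑ i ∈ m.support, m i ≤ 1) :
    m = 0 ∨ ∃ u, m = Finsupp.single u 1 := by
  rcases eq_or_ne m 0 with rfl | hm
  · exact Or.inl rfl
  right
  obtain ⟨u, hu⟩ := Finsupp.support_nonempty_iff.mpr hm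
  have h1 : 1 ≤ m u := Nat.one_le_iff_ne_zero.mpr (Finsupp.mem_support_iff.mp hu)
  have h2 : m u ≤ ∑ i ∈ m.support, m i := Finset.single_le_sum (fun i _ => Nat.zero_le _) hu
  have hsub : m.support ⊆ {u} := by
    intro x hx
    rw [Finset.mem_singleton]
    by_contra hxu
    have hpair : ({u, x} : Finset (Fin n)) ⊆ m.support := by
      intro y hy
      rcases Finset.mem_insert.mp hy with rfl | hy
      · exact hu
      · rwa [Finset.mem_singleton.mp hy]
    have h4 : ∑ i ∈ ({u, x} : Finset (Fin n)), m i ≤ ∑ i ∈ m.support, m i :=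
      Finset.sum_le_sum_of_subset hpair
    rw [Finset.sum_pair (fun h => hxu h.symm)] at h4
    have h3 : 1 ≤ m x := Nat.one_le_iff_ne_zero.mpr (Finsupp.mem_support_iff.mp hx)
    omega
  have hmu : m u = 1 := le_antisymm (h2.trans h) h1
  refine ⟨u, ?_⟩
  rw [Finsupp.support_subset_singleton.mp hsub, hmu]

lemma linear_expand {n : ℕ} {f : MvPolynomial (Fin n) ℤ} (hdeg : f.totalDegree ≤ 1) :
    f = C (coeff 0 f) + ∑ l : Fin n, C (coeff (Finsupp.single l 1) f) * X l := by
  apply MvPolynomial.ext; intro m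
  rw [coeff_add, coeff_C, coeff_sum]
  simp only [coeff_C_mul, coeff_X']
  rcases eq_or_ne m 0 with rfl | hm
  · rw [if_pos rfl, Finset.sum_eq_zero, add_zero]
    intro l _
    rw [if_neg (fun h => one_ne_zero (Finsupp.single_eq_zero.mp h)), mul_zero]
  rw [if_neg (fun h => hm h.symm), zero_add]
  by_cases hms : ∑ i ∈ m.support, m i ≤ 1
  · rcases monomial_classify m hms with rfl | ⟨u, rfl⟩
    · exact absurd rfl hm
    · rw [Finset.sum_eq_single u]
      · rw [if_pos rfl, mul_one]
      · intro l _ hlu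
        rw [if_neg (by rw [Finsupp.single_left_inj (one_ne_zero (α := ℕ))]; exact hlu), mul_zero]
      · intro h; exact absurd (Finset.mem_univ u) h
  · rw [coeff_eq_zero_of_totalDegree_lt (lt_of_le_of_lt hdeg (by omega))]
    rw [Finset.sum_eq_zero]
    intro l _
    rw [if_neg, mul_zero]
    intro h
    apply hms
    rw [← h]
    rw [Finsupp.support_single_ne_zero _ (one_ne_zero (α := ℕ)), Finset.sum_singleton,
      Finsupp.single_eq_same]

lemma linear_sub_aeval {n : ℕ} (τ : Fin n → MvPolynomial (Fin n) ℤ) (w : Fin n)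
    (hτ : ∀ l, l ≠ w → τ l = X l) {f : MvPolynomial (Fin n) ℤ} (hdeg : f.totalDegree ≤ 1) :
    f - aeval τ f = C (coeff (Finsupp.single w 1) f) * (X w - τ w) := by
  set c : Fin n → ℤ := fun l => coeff (Finsupp.single l 1) f with hc
  set c0 : ℤ := coeff 0 f with hc0
  have hf : f = C c0 + ∑ l : Fin n, C (c l) * X l := linear_expand hdeg
  calc f - aeval τ f
      = (C c0 + ∑ l : Fin n, C (c l) * X l)
        - aeval τ (C c0 + ∑ l : Fin n, C (c l) * X l) := by rw [← hf]
    _ = ∑ l : Fin n, C (c l) * (X l - τ l) := by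
        rw [map_add, map_sum]
        simp only [map_mul, aeval_X, aeval_C, MvPolynomial.algebraMap_eq]
        rw [show C c0 + ∑ l : Fin n, C (c l) * X l - (C c0 + ∑ x : Fin n, C (c x) * τ x)
            = (∑ l : Fin n, C (c l) * X l) - (∑ x : Fin n, C (c x) * τ x) by ring,
          ← Finset.sum_sub_distrib]
        exact Finset.sum_congr rfl (fun l _ => by rw [mul_sub])
    _ = C (c w) * (X w - τ w) := by
        rw [Finset.sum_eq_single w]
        · intro l _ hlw
          rw [hτ l hlw, sub_self, mul_zero]
        · intro h; exact absurd (Finset.mem_univ w) h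

lemma eq_C_mul_P {n : ℕ} {a b : Fin n} (hab : a ≠ b) {f : MvPolynomial (Fin n) ℤ}
    (hdeg : f.totalDegree ≤ 1) (hdvd : (X a + X b : MvPolynomial (Fin n) ℤ) ∣ f) :
    f = C (coeff (Finsupp.single a 1) f) * (X a + X b) := by
  have h0 : aeval (tauP a b) f = 0 := (dvd_iff_P hab f).mp hdvd
  have h := linear_sub_aeval (tauP a b) a (fun l hl => if_neg hl) hdeg
  rw [h0, sub_zero] at h
  rw [show (X a - tauP a b a : MvPolynomial (Fin n) ℤ) = X a + X b by
    simp only [tauP, eq_self_iff_true, if_true, sub_neg_eq_add]] at h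
  exact h

lemma eq_C_mul_Q {n : ℕ} {a c : Fin n} (hac : a ≠ c) {f : MvPolynomial (Fin n) ℤ}
    (hdeg : f.totalDegree ≤ 1) (hdvd : (1 + X a - X c : MvPolynomial (Fin n) ℤ) ∣ f) :
    f = C (- coeff (Finsupp.single c 1) f) * (1 + X a - X c) := by
  have h0 : aeval (tauQ a c) f = 0 := (dvd_iff_Q hac f).mp hdvd
  have h := linear_sub_aeval (tauQ a c) c (fun l hl => if_neg hl) hdeg
  rw [h0, sub_zero] at h
  rw [show (C (coeff (Finsupp.single c 1) f) * (X c - tauQ a c c) : MvPolynomial (Fin n) ℤ)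
      = C (- coeff (Finsupp.single c 1) f) * (1 + X a - X c) by
    simp only [tauQ, eq_self_iff_true, if_true, map_neg]; ring] at h
  exact h

lemma P_dvd_P {n : ℕ} {a b i j : Fin n} (hab : a ≠ b) (hij : i ≠ j)
    (h : (X a + X b : MvPolynomial (Fin n) ℤ) ∣ (X i + X j)) :
    (a = i ∧ b = j) ∨ (a = j ∧ b = i) := by
  rw [dvd_iff_P hab, map_add, aeval_X, aeval_X] at h
  simp only [tauP] at h
  by_cases hia : i = a
  · rw [if_pos hia, if_neg (fun hja : j = a => hij (hia ▸ hja ▸ rfl))] at h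
    have h2 : (X j : MvPolynomial (Fin n) ℤ) = X b := by linear_combination h
    exact Or.inl ⟨hia.symm, (MvPolynomial.X_injective h2).symm⟩
  by_cases hja : j = a
  · rw [if_neg hia, if_pos hja] at h
    have h2 : (X i : MvPolynomial (Fin n) ℤ) = X b := by linear_combination h
    exact Or.inr ⟨hja.symm, (MvPolynomial.X_injective h2).symm⟩
  · rw [if_neg hia, if_neg hja] at h
    exfalso
    have h2 := congrArg (eval (fun l : Fin n => if l = i then (1:ℤ) else 0)) h
    rw [map_add, eval_X, eval_X, if_pos rfl, if_neg (fun hh : j = i => hij hh.symm),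
      map_zero] at h2
    norm_num at h2

lemma Q_dvd_Q {n : ℕ} {a c i k : Fin n} (hac : a ≠ c) (hik : i ≠ k)
    (h : (1 + X a - X c : MvPolynomial (Fin n) ℤ) ∣ (1 + X i - X k)) :
    a = i ∧ c = k := by
  rw [dvd_iff_Q hac, map_sub, map_add, map_one, aeval_X, aeval_X] at h
  simp only [tauQ] at h
  by_cases hic : i = c <;> by_cases hkc : k = c
  · exact absurd (hic ▸ hkc ▸ rfl) hik
  · rw [if_pos hic, if_neg hkc] at h
    exfalso
    have h2 := congrArg constantCoeff h
    simp only [map_sub, map_add, map_one, constantCoeff_X, map_zero] at h2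
    omega
  · rw [if_neg hic, if_pos hkc] at h
    have h2 : (X i : MvPolynomial (Fin n) ℤ) = X a := by linear_combination h
    exact ⟨(MvPolynomial.X_injective h2).symm, hkc.symm⟩
  · rw [if_neg hic, if_neg hkc] at h
    exfalso
    have h2 := congrArg constantCoeff h
    simp only [map_sub, map_add, map_one, constantCoeff_X, map_zero] at h2
    omega

/-! #### Total degrees -/

lemma single_mem_sum {n : ℕ} (u : Fin n) {f : MvPolynomial (Fin n) ℤ}
    (h : coeff (Finsupp.single u 1) f ≠ 0) : 1 ≤ f.totalDegree := by
  have hm : Finsupp.single u 1 ∈ f.support := mem_support_iff.mpr h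
  have h2 := le_totalDegree hm
  rwa [Finsupp.sum_single_index rfl] at h2

lemma tdP {n : ℕ} {a b : Fin n} (hab : a ≠ b) :
    (X a + X b : MvPolynomial (Fin n) ℤ).totalDegree = 1 := by
  refine le_antisymm ((totalDegree_add _ _).trans ?_) ?_
  · simp [totalDegree_X]
  · exact single_mem_sum a (by rw [coeffP hab]; exact one_ne_zero)

lemma tdQ {n : ℕ} {a c : Fin n} (hac : a ≠ c) :
    (1 + X a - X c : MvPolynomial (Fin n) ℤ).totalDegree = 1 := by
  refine le_antisymm ((totalDegree_sub _ _).trans ?_) ?_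
  · refine max_le ((totalDegree_add _ _).trans ?_) ?_
    · simp [totalDegree_X, totalDegree_one]
    · simp [totalDegree_X]
  · exact single_mem_sum a (by rw [coeffQ hac]; exact one_ne_zero)

lemma eq_C_of_td_zero {n : ℕ} {f : MvPolynomial (Fin n) ℤ} (h : f.totalDegree = 0) :
    ∃ c : ℤ, f = C c := by
  refine ⟨coeff 0 f, ?_⟩
  apply MvPolynomial.ext; intro m
  rw [coeff_C]
  rcases eq_or_ne m 0 with rfl | hm
  · rw [if_pos rfl]
  · rw [if_neg (fun hh => hm hh.symm)]
    by_contra hc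
    have hmem : m ∈ f.support := mem_support_iff.mpr hc
    have h1 := le_totalDegree hmem
    rw [h, Nat.le_zero, Finsupp.sum] at h1
    apply hm
    ext x
    rw [Finsupp.zero_apply]
    by_cases hx : x ∈ m.support
    · exact Finset.sum_eq_zero_iff.mp h1 x hx
    · exact Finsupp.notMem_support_iff.mp hx

/-! #### Divisors of products of primes -/

lemma dvd_of_dvd_prime_mul {n : ℕ} {p f M : MvPolynomial (Fin n) ℤ} (hp : Prime p)
    (hnd : ¬ p ∣ f) (h : f ∣ p * M) : f ∣ M := by
  obtain ⟨g, hg⟩ := h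
  have hpg : p ∣ f * g := ⟨M, by rw [← hg]⟩
  rcases hp.dvd_mul.mp hpg with h1 | h2
  · exact absurd h1 hnd
  · obtain ⟨g', rfl⟩ := h2
    refine ⟨g', mul_left_cancel₀ hp.ne_zero ?_⟩
    rw [hg]; ring

lemma dvd_prod_cases {n : ℕ} {α : Type*} [DecidableEq α] (s : Finset α)
    (F : α → MvPolynomial (Fin n) ℤ)
    (hF : ∀ a ∈ s, F a = 1 ∨ Prime (F a)) {f : MvPolynomial (Fin n) ℤ}
    (hu : ¬ IsUnit f) (hf : f ∣ ∏ a ∈ s, F a) :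
    ∃ a ∈ s, Prime (F a) ∧ F a ∣ f := by
  induction s using Finset.induction_on with
  | empty =>
    rw [Finset.prod_empty] at hf
    exact absurd (isUnit_of_dvd_one hf) hu
  | insert a s' ha ih =>
    rw [Finset.prod_insert ha] at hf
    rcases hF a (Finset.mem_insert_self a s') with h1 | h1
    · rw [h1, one_mul] at hf
      obtain ⟨x, hx, hx2⟩ := ih (fun x hx => hF x (Finset.mem_insert_of_mem hx)) hf
      exact ⟨x, Finset.mem_insert_of_mem hx, hx2⟩
    · by_cases hd : F a ∣ f
      · exact ⟨a, Finset.mem_insert_self a s', h1, hd⟩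
      · obtain ⟨x, hx, hx2⟩ := ih (fun x hx => hF x (Finset.mem_insert_of_mem hx))
          (dvd_of_dvd_prime_mul h1 hd hf)
        exact ⟨x, Finset.mem_insert_of_mem hx, hx2⟩

lemma rename_invol {n : ℕ} {σ : Equiv.Perm (Fin n)} (hσ : ∀ i, σ (σ i) = i)
    (f : MvPolynomial (Fin n) ℤ) : rename (⇑σ) (rename (⇑σ) f) = f := by
  rw [rename_rename, show (⇑σ ∘ ⇑σ) = id from funext hσ, rename_id, AlgHom.id_apply]

end Statement5Aux

section Statement5Main

open MvPolynomial

variable {n : ℕ}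

open Classical in
lemma rename_Ppoly (e : Fin n → g) (σ : Equiv.Perm (Fin n)) :
    rename (⇑σ) (Ppoly e) = ∏ p : Fin n × Fin n,
      (if p.1 < p.2 ∧ ∃ k, Arrow e p.1 p.2 k then X (σ p.1) + X (σ p.2) else 1) := by
  unfold Ppoly
  rw [map_prod]
  refine Finset.prod_congr rfl fun p _ => ?_
  split_ifs with h
  · rw [map_add, rename_X, rename_X]
  · exact map_one _

open Classical in
lemma rename_Qpoly (e : Fin n → g) (σ : Equiv.Perm (Fin n)) :
    rename (⇑σ) (Qpoly e) = ∏ t : Fin n × Fin n × Fin n,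
      (if Arrow e t.1 t.2.1 t.2.2 then 1 + X (σ t.1) - X (σ t.2.2) else 1) := by
  unfold Qpoly
  rw [map_prod]
  refine Finset.prod_congr rfl fun p _ => ?_
  split_ifs with h
  · rw [map_sub, map_add, map_one, rename_X, rename_X]
  · exact map_one _

open Classical in
lemma P_mem_dvd {e : Fin n → g} {i j k : Fin n} (hij : i < j) (h : Arrow e i j k) :
    (X i + X j : MvPolynomial (Fin n) ℤ) ∣ Ppoly e := by
  unfold Ppoly
  have hd : (if (i, j).1 < (i, j).2 ∧ ∃ k, Arrow e (i, j).1 (i, j).2 k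
      then (X (i, j).1 + X (i, j).2 : MvPolynomial (Fin n) ℤ) else 1) ∣
      ∏ p : Fin n × Fin n,
        (if p.1 < p.2 ∧ ∃ k, Arrow e p.1 p.2 k
          then (X p.1 + X p.2 : MvPolynomial (Fin n) ℤ) else 1) :=
    Finset.dvd_prod_of_mem _ (Finset.mem_univ (i, j))
  rwa [if_pos ⟨hij, k, h⟩] at hd

lemma P_unordered_dvd {e : Fin n → g} {i j k : Fin n} (hne : i ≠ j) (h : Arrow e i j k) :
    (X i + X j : MvPolynomial (Fin n) ℤ) ∣ Ppoly e := by
  rcases hne.lt_or_gt with h' | h'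
  · exact P_mem_dvd h' h
  · rw [add_comm]
    exact P_mem_dvd h' (Arrow.symm h)

open Classical in
lemma Pσ_unordered_dvd {e : Fin n → g} {σ : Equiv.Perm (Fin n)} {i j k : Fin n}
    (hne : i ≠ j) (h : Arrow e i j k) :
    (X (σ i) + X (σ j) : MvPolynomial (Fin n) ℤ) ∣ rename (⇑σ) (Ppoly e) := by
  rw [rename_Ppoly]
  rcases hne.lt_or_gt with h' | h'
  · have hd : (if (i, j).1 < (i, j).2 ∧ ∃ k, Arrow e (i, j).1 (i, j).2 k
        then (X (σ (i, j).1) + X (σ (i, j).2) : MvPolynomial (Fin n) ℤ) else 1) ∣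
        ∏ p : Fin n × Fin n,
          (if p.1 < p.2 ∧ ∃ k, Arrow e p.1 p.2 k
            then (X (σ p.1) + X (σ p.2) : MvPolynomial (Fin n) ℤ) else 1) :=
      Finset.dvd_prod_of_mem _ (Finset.mem_univ (i, j))
    rwa [if_pos ⟨h', k, h⟩] at hd
  · have hd : (if (j, i).1 < (j, i).2 ∧ ∃ k, Arrow e (j, i).1 (j, i).2 k
        then (X (σ (j, i).1) + X (σ (j, i).2) : MvPolynomial (Fin n) ℤ) else 1) ∣
        ∏ p : Fin n × Fin n,
          (if p.1 < p.2 ∧ ∃ k, Arrow e p.1 p.2 k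
            then (X (σ p.1) + X (σ p.2) : MvPolynomial (Fin n) ℤ) else 1) :=
      Finset.dvd_prod_of_mem _ (Finset.mem_univ (j, i))
    rw [if_pos ⟨h', k, Arrow.symm h⟩] at hd
    rwa [add_comm]

open Classical in
lemma Q_mem_dvd {e : Fin n → g} {i j k : Fin n} (h : Arrow e i j k) :
    (1 + X i - X k : MvPolynomial (Fin n) ℤ) ∣ Qpoly e := by
  unfold Qpoly
  have hd : (if Arrow e (i, j, k).1 (i, j, k).2.1 (i, j, k).2.2
      then (1 + X (i, j, k).1 - X (i, j, k).2.2 : MvPolynomial (Fin n) ℤ) else 1) ∣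
      ∏ t : Fin n × Fin n × Fin n,
        (if Arrow e t.1 t.2.1 t.2.2
          then (1 + X t.1 - X t.2.2 : MvPolynomial (Fin n) ℤ) else 1) :=
    Finset.dvd_prod_of_mem _ (Finset.mem_univ (i, j, k))
  rwa [if_pos h] at hd

open Classical in
lemma Qσ_mem_dvd {e : Fin n → g} {σ : Equiv.Perm (Fin n)} {i j k : Fin n}
    (h : Arrow e i j k) :
    (1 + X (σ i) - X (σ k) : MvPolynomial (Fin n) ℤ) ∣ rename (⇑σ) (Qpoly e) := by
  rw [rename_Qpoly]
  have hd : (if Arrow e (i, j, k).1 (i, j, k).2.1 (i, j, k).2.2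
      then (1 + X (σ (i, j, k).1) - X (σ (i, j, k).2.2) : MvPolynomial (Fin n) ℤ) else 1) ∣
      ∏ t : Fin n × Fin n × Fin n,
        (if Arrow e t.1 t.2.1 t.2.2
          then (1 + X (σ t.1) - X (σ t.2.2) : MvPolynomial (Fin n) ℤ) else 1) :=
    Finset.dvd_prod_of_mem _ (Finset.mem_univ (i, j, k))
  rwa [if_pos h] at hd

open Classical in
lemma P_factor {e : Fin n → g} {f : MvPolynomial (Fin n) ℤ} (hu : ¬ IsUnit f)
    (hf : f ∣ Ppoly e) :
    ∃ i j k : Fin n, i < j ∧ Arrow e i j k ∧ (X i + X j : MvPolynomial (Fin n) ℤ) ∣ f := by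
  unfold Ppoly at hf
  have hF : ∀ p : Fin n × Fin n, p ∈ Finset.univ →
      (if p.1 < p.2 ∧ ∃ k, Arrow e p.1 p.2 k
        then (X p.1 + X p.2 : MvPolynomial (Fin n) ℤ) else 1) = 1 ∨
      Prime (if p.1 < p.2 ∧ ∃ k, Arrow e p.1 p.2 k
        then (X p.1 + X p.2 : MvPolynomial (Fin n) ℤ) else 1) := by
    intro p _
    by_cases hcond : p.1 < p.2 ∧ ∃ k, Arrow e p.1 p.2 k
    · exact Or.inr (by rw [if_pos hcond]; exact prime_P (ne_of_lt hcond.1))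
    · exact Or.inl (if_neg hcond)
  obtain ⟨p, -, hp, hd⟩ := dvd_prod_cases _ _ hF hu hf
  by_cases hcond : p.1 < p.2 ∧ ∃ k, Arrow e p.1 p.2 k
  · obtain ⟨h1, k, h2⟩ := hcond
    refine ⟨p.1, p.2, k, h1, h2, ?_⟩
    rwa [if_pos ⟨h1, k, h2⟩] at hd
  · rw [if_neg hcond] at hp
    exact absurd hp not_prime_one

open Classical in
lemma Pσ_factor {e : Fin n → g} {σ : Equiv.Perm (Fin n)} {f : MvPolynomial (Fin n) ℤ}
    (hu : ¬ IsUnit f) (hf : f ∣ rename (⇑σ) (Ppoly e)) :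
    ∃ i j k : Fin n, i < j ∧ Arrow e i j k ∧
      (X (σ i) + X (σ j) : MvPolynomial (Fin n) ℤ) ∣ f := by
  rw [rename_Ppoly] at hf
  have hF : ∀ p : Fin n × Fin n, p ∈ Finset.univ →
      (if p.1 < p.2 ∧ ∃ k, Arrow e p.1 p.2 k
        then (X (σ p.1) + X (σ p.2) : MvPolynomial (Fin n) ℤ) else 1) = 1 ∨
      Prime (if p.1 < p.2 ∧ ∃ k, Arrow e p.1 p.2 k
        then (X (σ p.1) + X (σ p.2) : MvPolynomial (Fin n) ℤ) else 1) := by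
    intro p _
    by_cases hcond : p.1 < p.2 ∧ ∃ k, Arrow e p.1 p.2 k
    · exact Or.inr (by
        rw [if_pos hcond]
        exact prime_P (fun hh => (ne_of_lt hcond.1) (σ.injective hh)))
    · exact Or.inl (if_neg hcond)
  obtain ⟨p, -, hp, hd⟩ := dvd_prod_cases _ _ hF hu hf
  by_cases hcond : p.1 < p.2 ∧ ∃ k, Arrow e p.1 p.2 k
  · obtain ⟨h1, k, h2⟩ := hcond
    refine ⟨p.1, p.2, k, h1, h2, ?_⟩
    rwa [if_pos ⟨h1, k, h2⟩] at hd
  · rw [if_neg hcond] at hp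
    exact absurd hp not_prime_one

open Classical in
lemma Q_factor {e : Fin n → g} {f : MvPolynomial (Fin n) ℤ} (hu : ¬ IsUnit f)
    (hf : f ∣ Qpoly e) :
    ∃ i j k : Fin n, Arrow e i j k ∧ i ≠ k ∧
      (1 + X i - X k : MvPolynomial (Fin n) ℤ) ∣ f := by
  unfold Qpoly at hf
  have hF : ∀ t : Fin n × Fin n × Fin n, t ∈ Finset.univ →
      (if Arrow e t.1 t.2.1 t.2.2
        then (1 + X t.1 - X t.2.2 : MvPolynomial (Fin n) ℤ) else 1) = 1 ∨
      Prime (if Arrow e t.1 t.2.1 t.2.2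
        then (1 + X t.1 - X t.2.2 : MvPolynomial (Fin n) ℤ) else 1) := by
    intro t _
    by_cases hcond : Arrow e t.1 t.2.1 t.2.2
    · by_cases hik : t.1 = t.2.2
      · exact Or.inl (by rw [if_pos hcond, ← hik, add_sub_cancel_right])
      · exact Or.inr (by rw [if_pos hcond]; exact prime_Q hik)
    · exact Or.inl (if_neg hcond)
  obtain ⟨t, -, hp, hd⟩ := dvd_prod_cases _ _ hF hu hf
  by_cases hcond : Arrow e t.1 t.2.1 t.2.2
  · by_cases hik : t.1 = t.2.2
    · rw [if_pos hcond, ← hik, add_sub_cancel_right] at hp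
      exact absurd hp not_prime_one
    · refine ⟨t.1, t.2.1, t.2.2, hcond, hik, ?_⟩
      rwa [if_pos hcond] at hd
  · rw [if_neg hcond] at hp
    exact absurd hp not_prime_one

open Classical in
lemma Qσ_factor {e : Fin n → g} {σ : Equiv.Perm (Fin n)} {f : MvPolynomial (Fin n) ℤ}
    (hu : ¬ IsUnit f) (hf : f ∣ rename (⇑σ) (Qpoly e)) :
    ∃ i j k : Fin n, Arrow e i j k ∧ i ≠ k ∧
      (1 + X (σ i) - X (σ k) : MvPolynomial (Fin n) ℤ) ∣ f := by
  rw [rename_Qpoly] at hf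
  have hF : ∀ t : Fin n × Fin n × Fin n, t ∈ Finset.univ →
      (if Arrow e t.1 t.2.1 t.2.2
        then (1 + X (σ t.1) - X (σ t.2.2) : MvPolynomial (Fin n) ℤ) else 1) = 1 ∨
      Prime (if Arrow e t.1 t.2.1 t.2.2
        then (1 + X (σ t.1) - X (σ t.2.2) : MvPolynomial (Fin n) ℤ) else 1) := by
    intro t _
    by_cases hcond : Arrow e t.1 t.2.1 t.2.2
    · by_cases hik : t.1 = t.2.2
      · exact Or.inl (by rw [if_pos hcond, ← hik, add_sub_cancel_right])
      · exact Or.inr (by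
          rw [if_pos hcond]
          exact prime_Q (fun hh => hik (σ.injective hh)))
    · exact Or.inl (if_neg hcond)
  obtain ⟨t, -, hp, hd⟩ := dvd_prod_cases _ _ hF hu hf
  by_cases hcond : Arrow e t.1 t.2.1 t.2.2
  · by_cases hik : t.1 = t.2.2
    · rw [if_pos hcond, ← hik, add_sub_cancel_right] at hp
      exact absurd hp not_prime_one
    · refine ⟨t.1, t.2.1, t.2.2, hcond, hik, ?_⟩
      rwa [if_pos hcond] at hd
  · rw [if_neg hcond] at hp
    exact absurd hp not_prime_one

end Statement5Main

section Statement5Iffs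

open MvPolynomial

variable {n : ℕ}

lemma P_common_iff (e : Module.Basis (Fin n) ℝ g) (σ : Equiv.Perm (Fin n)) (hσ : ∀ i, σ (σ i) = i) :
    (∃ f : MvPolynomial (Fin n) ℤ, f.totalDegree = 1 ∧
        f ∣ Ppoly (⇑e) ∧ f ∣ MvPolynomial.rename (⇑σ) (Ppoly (⇑e)))
      ↔ ∃ i j k m : Fin n, Arrow (⇑e) i j k ∧ Arrow (⇑e) (σ i) (σ j) m := by
  constructor
  · rintro ⟨f, hdeg, hfP, hfσ⟩
    have hu : ¬ IsUnit f := not_isUnit_of_pos (by omega)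
    obtain ⟨i, j, k, hij, ha1, hd1⟩ := P_factor hu hfP
    obtain ⟨a, b, c, hab, ha2, hd2⟩ := Pσ_factor hu hfσ
    have hne : i ≠ j := ne_of_lt hij
    have hσab : σ a ≠ σ b := fun hh => (ne_of_lt hab) (σ.injective hh)
    have hf0 : f ≠ 0 := by
      intro h0
      rw [h0, totalDegree_zero] at hdeg
      omega
    have hfc := eq_C_mul_P hne (le_of_eq hdeg) hd1
    set c' : ℤ := coeff (Finsupp.single i 1) f with hc'
    have hc0 : c' ≠ 0 := by
      intro h0
      rw [h0, map_zero, zero_mul] at hfc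
      exact hf0 hfc
    rw [hfc] at hd2
    rcases (prime_P hσab).dvd_mul.mp hd2 with h' | h'
    · exact absurd h' (P_not_dvd_C hσab hc0)
    · rcases P_dvd_P hσab hne h' with ⟨h1, h2⟩ | ⟨h1, h2⟩
      · exact ⟨a, b, c, k, ha2, by rw [h1, h2]; exact ha1⟩
      · exact ⟨a, b, c, k, ha2, by rw [h1, h2]; exact ha1.symm⟩
  · rintro ⟨i, j, k, m, h1, h2⟩
    have hne : i ≠ j := h1.ne_src
    refine ⟨X i + X j, tdP hne, P_unordered_dvd hne h1, ?_⟩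
    have hσne : σ i ≠ σ j := fun hh => hne (σ.injective hh)
    have hd := Pσ_unordered_dvd (σ := σ) hσne h2
    rwa [hσ i, hσ j] at hd

lemma Q_common_iff [LieRing.IsNilpotent g] (e : Module.Basis (Fin n) ℝ g)
    (σ : Equiv.Perm (Fin n)) (hσ : ∀ i, σ (σ i) = i) :
    (∃ f : MvPolynomial (Fin n) ℤ, f.totalDegree = 1 ∧
        f ∣ Qpoly (⇑e) ∧ f ∣ MvPolynomial.rename (⇑σ) (Qpoly (⇑e)))
      ↔ ∃ i j k l : Fin n, Arrow (⇑e) i j k ∧ Arrow (⇑e) l (σ j) (σ k) := by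
  constructor
  · rintro ⟨f, hdeg, hfQ, hfσ⟩
    have hu : ¬ IsUnit f := not_isUnit_of_pos (by omega)
    obtain ⟨i, j, k, ha1, hik, hd1⟩ := Q_factor hu hfQ
    obtain ⟨a, b, c, ha2, hac, hd2⟩ := Qσ_factor hu hfσ
    have hσac : σ a ≠ σ c := fun hh => hac (σ.injective hh)
    have hf0 : f ≠ 0 := by
      intro h0
      rw [h0, totalDegree_zero] at hdeg
      omega
    have hfc := eq_C_mul_Q hik (le_of_eq hdeg) hd1
    set d : ℤ := - coeff (Finsupp.single k 1) f with hd'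
    have hd0 : d ≠ 0 := by
      intro h0
      rw [h0, map_zero, zero_mul] at hfc
      exact hf0 hfc
    rw [hfc] at hd2
    rcases (prime_Q hσac).dvd_mul.mp hd2 with h' | h'
    · exact absurd h' (Q_not_dvd_C hσac hd0)
    · obtain ⟨h1, h2⟩ := Q_dvd_Q hσac hik h'
      refine ⟨b, a, c, j, ha2.symm, ?_⟩
      rw [h1, h2]
      exact ha1.symm
  · rintro ⟨i, j, k, l, h1, h2⟩
    have hjk : j ≠ k := h1.ne_tgt
    refine ⟨1 + X j - X k, tdQ hjk, Q_mem_dvd h1.symm, ?_⟩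
    have hd := Qσ_mem_dvd (σ := σ) h2.symm
    rwa [hσ j, hσ k] at hd

lemma P_inv_iff (e : Module.Basis (Fin n) ℝ g) (σ : Equiv.Perm (Fin n)) (hσ : ∀ i, σ (σ i) = i) :
    (∃ f : MvPolynomial (Fin n) ℤ, f.totalDegree = 1 ∧
        f ∣ Ppoly (⇑e) ∧ f ∣ MvPolynomial.rename (⇑σ) (Ppoly (⇑e)))
      ↔ (∃ f : MvPolynomial (Fin n) ℤ, 0 < f.totalDegree ∧
        f ∣ Ppoly (⇑e) ∧ MvPolynomial.rename (⇑σ) f = f) := by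
  constructor
  · rintro ⟨f, hdeg, hfP, hfσ⟩
    have hu : ¬ IsUnit f := not_isUnit_of_pos (by omega)
    obtain ⟨i, j, k, hij, ha1, hd1⟩ := P_factor hu hfP
    have hne : i ≠ j := ne_of_lt hij
    have hσne : σ i ≠ σ j := fun hh => hne (σ.injective hh)
    have hσP : (X (σ i) + X (σ j) : MvPolynomial (Fin n) ℤ) ∣ Ppoly (⇑e) := by
      have h' : (X i + X j : MvPolynomial (Fin n) ℤ) ∣ rename (⇑σ) (Ppoly (⇑e)) :=
        hd1.trans hfσ
      have h'' := map_dvd (rename (⇑σ)) h'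
      rw [rename_invol hσ, map_add, rename_X, rename_X] at h''
      exact h''
    by_cases hcase : (σ i = i ∧ σ j = j) ∨ (σ i = j ∧ σ j = i)
    · refine ⟨X i + X j, by rw [tdP hne]; omega, hd1.trans hfP, ?_⟩
      rw [map_add, rename_X, rename_X]
      rcases hcase with ⟨h1, h2⟩ | ⟨h1, h2⟩
      · rw [h1, h2]
      · rw [h1, h2, add_comm]
    · have hnd : ¬ (X (σ i) + X (σ j) : MvPolynomial (Fin n) ℤ) ∣ (X i + X j) := by
        intro hdd
        rcases P_dvd_P hσne hne hdd with ⟨h1, h2⟩ | ⟨h1, h2⟩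
        · exact hcase (Or.inl ⟨h1, h2⟩)
        · exact hcase (Or.inr ⟨h1, h2⟩)
      obtain ⟨M, hM⟩ := hd1.trans hfP
      have hm : (X (σ i) + X (σ j) : MvPolynomial (Fin n) ℤ) ∣ M := by
        have h2 : (X (σ i) + X (σ j) : MvPolynomial (Fin n) ℤ) ∣ (X i + X j) * M := by
          rw [← hM]; exact hσP
        exact ((prime_P hσne).dvd_mul.mp h2).resolve_left hnd
      refine ⟨(X i + X j) * (X (σ i) + X (σ j)), ?_, ?_, ?_⟩
      · by_contra hz
        push_neg at hz
        rw [Nat.le_zero] at hz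
        obtain ⟨c, hc⟩ := eq_C_of_td_zero hz
        have hdd : (X i + X j : MvPolynomial (Fin n) ℤ) ∣ C c := by
          rw [← hc]; exact dvd_mul_right _ _
        rcases eq_or_ne c 0 with rfl | hc0
        · rw [map_zero] at hc
          exact mul_ne_zero (prime_P hne).ne_zero (prime_P hσne).ne_zero hc
        · exact P_not_dvd_C hne hc0 hdd
      · rw [hM]
        exact mul_dvd_mul_left _ hm
      · rw [map_mul, map_add, map_add, rename_X, rename_X, rename_X, rename_X, hσ i, hσ j]
        ring
  · rintro ⟨h, hpos, hhP, hinv⟩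
    have hu : ¬ IsUnit h := not_isUnit_of_pos hpos
    obtain ⟨i, j, k, hij, ha1, hd1⟩ := P_factor hu hhP
    have hne : i ≠ j := ne_of_lt hij
    refine ⟨X i + X j, tdP hne, hd1.trans hhP, ?_⟩
    have h2 := map_dvd (rename (⇑σ)) hd1
    rw [hinv] at h2
    have h3 := map_dvd (rename (⇑σ)) (h2.trans hhP)
    rwa [rename_invol hσ] at h3

lemma Q_inv_iff (e : Module.Basis (Fin n) ℝ g) (σ : Equiv.Perm (Fin n)) (hσ : ∀ i, σ (σ i) = i) :
    (∃ f : MvPolynomial (Fin n) ℤ, f.totalDegree = 1 ∧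
        f ∣ Qpoly (⇑e) ∧ f ∣ MvPolynomial.rename (⇑σ) (Qpoly (⇑e)))
      ↔ (∃ f : MvPolynomial (Fin n) ℤ, 0 < f.totalDegree ∧
        f ∣ Qpoly (⇑e) ∧ MvPolynomial.rename (⇑σ) f = f) := by
  constructor
  · rintro ⟨f, hdeg, hfQ, hfσ⟩
    have hu : ¬ IsUnit f := not_isUnit_of_pos (by omega)
    obtain ⟨i, j, k, ha1, hik, hd1⟩ := Q_factor hu hfQ
    have hσik : σ i ≠ σ k := fun hh => hik (σ.injective hh)
    have hσQ : (1 + X (σ i) - X (σ k) : MvPolynomial (Fin n) ℤ) ∣ Qpoly (⇑e) := by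
      have h' : (1 + X i - X k : MvPolynomial (Fin n) ℤ) ∣ rename (⇑σ) (Qpoly (⇑e)) :=
        hd1.trans hfσ
      have h'' := map_dvd (rename (⇑σ)) h'
      rw [rename_invol hσ, map_sub, map_add, map_one, rename_X, rename_X] at h''
      exact h''
    by_cases hcase : σ i = i ∧ σ k = k
    · refine ⟨1 + X i - X k, by rw [tdQ hik]; omega, hd1.trans hfQ, ?_⟩
      rw [map_sub, map_add, map_one, rename_X, rename_X, hcase.1, hcase.2]
    · have hnd : ¬ (1 + X (σ i) - X (σ k) : MvPolynomial (Fin n) ℤ) ∣ (1 + X i - X k) := by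
        intro hdd
        exact hcase (Q_dvd_Q hσik hik hdd)
      obtain ⟨M, hM⟩ := hd1.trans hfQ
      have hm : (1 + X (σ i) - X (σ k) : MvPolynomial (Fin n) ℤ) ∣ M := by
        have h2 : (1 + X (σ i) - X (σ k) : MvPolynomial (Fin n) ℤ) ∣ (1 + X i - X k) * M := by
          rw [← hM]; exact hσQ
        exact ((prime_Q hσik).dvd_mul.mp h2).resolve_left hnd
      refine ⟨(1 + X i - X k) * (1 + X (σ i) - X (σ k)), ?_, ?_, ?_⟩
      · by_contra hz
        push_neg at hz
        rw [Nat.le_zero] at hz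
        obtain ⟨c, hc⟩ := eq_C_of_td_zero hz
        have hdd : (1 + X i - X k : MvPolynomial (Fin n) ℤ) ∣ C c := by
          rw [← hc]; exact dvd_mul_right _ _
        rcases eq_or_ne c 0 with rfl | hc0
        · rw [map_zero] at hc
          exact mul_ne_zero (prime_Q hik).ne_zero (prime_Q hσik).ne_zero hc
        · exact Q_not_dvd_C hik hc0 hdd
      · rw [hM]
        exact mul_dvd_mul_left _ hm
      · rw [map_mul, map_sub, map_add, map_one, map_sub, map_add, map_one,
          rename_X, rename_X, rename_X, rename_X, hσ i, hσ k]
        ring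
  · rintro ⟨h, hpos, hhQ, hinv⟩
    have hu : ¬ IsUnit h := not_isUnit_of_pos hpos
    obtain ⟨i, j, k, ha1, hik, hd1⟩ := Q_factor hu hhQ
    refine ⟨1 + X i - X k, tdQ hik, hd1.trans hhQ, ?_⟩
    have h2 := map_dvd (rename (⇑σ)) hd1
    rw [hinv] at h2
    have h3 := map_dvd (rename (⇑σ)) (h2.trans hhQ)
    rwa [rename_invol hσ] at h3

end Statement5Iffs

/-- For an order-two permutation `σ` of a nice basis, being arrow-breaking is
equivalent to `P, σP` (resp. `Q, σQ`) having no common linear divisor, which is in turn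
equivalent to `P` and `Q` having no `σ`-invariant divisor of positive degree. -/
theorem statement5 {n : ℕ} {g : Type*} [LieRing g] [LieAlgebra ℝ g]
    [LieRing.IsNilpotent g]
    (e : Module.Basis (Fin n) ℝ g) (hnice : IsNiceBasis e)
    (σ : Equiv.Perm (Fin n)) (hσ : ∀ i, σ (σ i) = i) :
    (IsArrowBreaking (⇑e) σ ↔
      ((¬ ∃ f : MvPolynomial (Fin n) ℤ, f.totalDegree = 1 ∧
          f ∣ Ppoly (⇑e) ∧ f ∣ MvPolynomial.rename (⇑σ) (Ppoly (⇑e))) ∧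
       (¬ ∃ f : MvPolynomial (Fin n) ℤ, f.totalDegree = 1 ∧
          f ∣ Qpoly (⇑e) ∧ f ∣ MvPolynomial.rename (⇑σ) (Qpoly (⇑e))))) ∧
    (((¬ ∃ f : MvPolynomial (Fin n) ℤ, f.totalDegree = 1 ∧
          f ∣ Ppoly (⇑e) ∧ f ∣ MvPolynomial.rename (⇑σ) (Ppoly (⇑e))) ∧
      (¬ ∃ f : MvPolynomial (Fin n) ℤ, f.totalDegree = 1 ∧
          f ∣ Qpoly (⇑e) ∧ f ∣ MvPolynomial.rename (⇑σ) (Qpoly (⇑e)))) ↔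
     ((¬ ∃ f : MvPolynomial (Fin n) ℤ, 0 < f.totalDegree ∧
          f ∣ Ppoly (⇑e) ∧ MvPolynomial.rename (⇑σ) f = f) ∧
      (¬ ∃ f : MvPolynomial (Fin n) ℤ, 0 < f.totalDegree ∧
          f ∣ Qpoly (⇑e) ∧ MvPolynomial.rename (⇑σ) f = f))) := by
  constructor
  · constructor
    · rintro ⟨-, h2, h3⟩
      constructor
      · rw [P_common_iff e σ hσ]
        rintro ⟨i, j, k, m, a1, a2⟩
        exact h3 i j k a1 m a2
      · rw [Q_common_iff e σ hσ]
        rintro ⟨i, j, k, l, a1, a2⟩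
        exact h2 i j k a1 l a2
    · rintro ⟨hp, hq⟩
      refine ⟨hσ, ?_, ?_⟩
      · intro i j k h l hl
        exact hq ((Q_common_iff e σ hσ).mpr ⟨i, j, k, l, h, hl⟩)
      · intro i j k h m hm
        exact hp ((P_common_iff e σ hσ).mpr ⟨i, j, k, m, h, hm⟩)
  · exact and_congr (not_congr (P_inv_iff e σ hσ)) (not_congr (Q_inv_iff e σ hσ))


end ArrowBreakingPaper
end

section
/- Let g be a finite-dimensional real nilpotent Lie algebra with a nice basis B, let s = dim z(g) be the dimension of the center of g, and let r = dim g − s. If r ≤ s + 3, then there exists an arrow-breaking involution σ of B. -/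
open scoped BigOperators

namespace ArrowBreakingPaper

variable {ι : Type*} {g : Type*} [LieRing g] [LieAlgebra ℝ g]

section Basics

variable {n : ℕ} (e : Module.Basis (Fin n) ℝ g)

/-- `i` is a source: some bracket with it is nonzero. -/
def IsSrc (i : Fin n) : Prop := ∃ j, ⁅e i, e j⁆ ≠ 0

lemma arrow_ne_zero {i j k : Fin n} (h : Arrow (⇑e) i j k) : ⁅e i, e j⁆ ≠ 0 := by
  obtain ⟨c, hc, hb⟩ := h
  rw [hb]
  exact smul_ne_zero hc (e.ne_zero k)

lemma arrow_fst_src {i j k : Fin n} (h : Arrow (⇑e) i j k) : IsSrc e i :=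
  ⟨j, arrow_ne_zero e h⟩

lemma lie_ne_comm {i j : Fin n} (h : ⁅e i, e j⁆ ≠ 0) : ⁅e j, e i⁆ ≠ 0 := by
  rw [← lie_skew, neg_ne_zero]; exact h

lemma arrow_snd_src {i j k : Fin n} (h : Arrow (⇑e) i j k) : IsSrc e j :=
  ⟨i, lie_ne_comm e (arrow_ne_zero e h)⟩

lemma not_src_lie {i : Fin n} (h : ¬ IsSrc e i) (j : Fin n) : ⁅e i, e j⁆ = 0 := by
  by_contra hne
  exact h ⟨j, hne⟩

lemma arrow_symm {i j k : Fin n} (h : Arrow (⇑e) i j k) : Arrow (⇑e) j i k := by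
  obtain ⟨c, hc, hb⟩ := h
  exact ⟨-c, neg_ne_zero.2 hc, by rw [← lie_skew, hb, neg_smul]⟩

lemma nice_arrow_of_ne (hnice : IsNiceBasis e) {i j : Fin n} (h : ⁅e i, e j⁆ ≠ 0) :
    ∃ k, Arrow (⇑e) i j k := by
  obtain ⟨k, c, hb⟩ := hnice.1 i j
  refine ⟨k, c, fun hc => ?_, hb⟩
  rw [hc, zero_smul] at hb
  exact h hb

lemma arrow_repr {i j k : Fin n} (h : Arrow (⇑e) i j k) : e.repr ⁅e i, e j⁆ k ≠ 0 := by
  obtain ⟨c, hc, hb⟩ := h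
  rw [hb, map_smul, Module.Basis.repr_self]
  simpa using hc

/-- Niceness: two arrows with the same source and the same head have the same label. -/
lemma nice_label_unique (hnice : IsNiceBasis e) {i j j' k : Fin n}
    (h : Arrow (⇑e) i j k) (h' : Arrow (⇑e) i j' k) : j = j' :=
  hnice.2 i k j j' (arrow_repr e h) (arrow_repr e h')

/-- Key Jacobi-based lemma. -/
lemma jacobi_break {u y z v : Fin n} {c : ℝ} (hc : c ≠ 0)
    (h1 : ⁅e y, e v⁆ = 0)
    (h2 : ⁅e u, e y⁆ = c • e z)
    (h3 : ⁅e u, e v⁆ = 0 ∨ ∃ (c₂ : ℝ) (h' : Fin n), ⁅e u, e v⁆ = c₂ • e h' ∧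
      ∀ b : Fin n, ⁅e h', e b⁆ = 0) :
    ⁅e z, e v⁆ = 0 := by
  have key : ⁅⁅e u, e y⁆, e v⁆ = 0 := by
    rw [lie_lie, h1, lie_zero, zero_sub, neg_eq_zero]
    rcases h3 with h3 | ⟨c₂, h', hb, hz⟩
    · rw [h3, lie_zero]
    · rw [hb, lie_smul, ← lie_skew, hz, neg_zero, smul_zero]
  rw [h2, smul_lie] at key
  exact (smul_eq_zero.1 key).resolve_left hc

/-- If `z` is central then its coordinates on source basis vectors vanish. -/
lemma center_repr_eq_zero (hnice : IsNiceBasis e) {z : g}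
    (hz : z ∈ LieAlgebra.center ℝ g) {i : Fin n} (hi : IsSrc e i) :
    e.repr z i = 0 := by
  obtain ⟨j, hij⟩ := hi
  obtain ⟨k, c, hb⟩ := hnice.1 i j
  have hc : c ≠ 0 := by
    rintro rfl
    rw [zero_smul] at hb
    exact hij hb
  have hcent : ⁅e j, z⁆ = 0 := (LieModule.mem_maxTrivSubmodule ℝ g g z).1 hz (e j)
  have hsum : ⁅e j, z⁆ = ∑ i', e.repr z i' • ⁅e j, e i'⁆ := by
    have : ⁅e j, z⁆ = (LieAlgebra.ad ℝ g (e j)) z :=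
      (LieAlgebra.ad_apply (R := ℝ) (L := g) (e j) z).symm
    rw [this]
    conv_lhs => rw [← Module.Basis.sum_repr e z]
    rw [map_sum]
    exact Finset.sum_congr rfl fun i' _ => by
      rw [map_smul, LieAlgebra.ad_apply]
  have hrepr : ∑ i', e.repr z i' * e.repr ⁅e j, e i'⁆ k = (0 : ℝ) := by
    have := congrArg (fun w => e.repr w k) (hsum.symm.trans hcent)
    simpa [map_sum, Finsupp.finset_sum_apply] using this
  have hone : ∀ i' ∈ Finset.univ, i' ≠ i → e.repr z i' * e.repr ⁅e j, e i'⁆ k = 0 := by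
    intro i' _ hne
    by_cases h0 : e.repr ⁅e j, e i'⁆ k = 0
    · rw [h0, mul_zero]
    · have hik : e.repr ⁅e j, e i⁆ k ≠ 0 := by
        have : ⁅e j, e i⁆ = (-c) • e k := by
          rw [← lie_skew, hb, neg_smul]
        rw [this, map_smul, Module.Basis.repr_self]
        simpa using hc
      exact absurd (hnice.2 j k i' i h0 hik) hne
  rw [Finset.sum_eq_single_of_mem i (Finset.mem_univ i) hone] at hrepr
  have hik : e.repr ⁅e j, e i⁆ k = -c := by
    have : ⁅e j, e i⁆ = (-c) • e k := by rw [← lie_skew, hb, neg_smul]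
    rw [this, map_smul, Module.Basis.repr_self]
    simp
  rw [hik] at hrepr
  rcases mul_eq_zero.1 hrepr with h | h
  · exact h
  · exact absurd h (by simpa using hc)

/-- The center is contained in the span of the non-source basis vectors. -/
lemma center_le_span (hnice : IsNiceBasis e) :
    (LieAlgebra.center ℝ g).toSubmodule ≤
      Submodule.span ℝ (⇑e '' {i | ¬ IsSrc e i}) := by
  intro z hz
  rw [Module.Basis.mem_span_image]
  intro i hi
  simp only [Finset.mem_coe, Finsupp.mem_support_iff] at hi
  by_contra hsrc
  simp only [Set.mem_setOf_eq, not_not] at hsrc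
  exact hi (center_repr_eq_zero e hnice hz hsrc)

end Basics

section Depth

variable {n : ℕ} [LieRing.IsNilpotent g] (e : Module.Basis (Fin n) ℝ g)

noncomputable def depth (i : Fin n) : ℕ :=
  sSup {m | e i ∈ LieModule.lowerCentralSeries ℝ g g m}

lemma depth_bddAbove (i : Fin n) :
    BddAbove {m | e i ∈ LieModule.lowerCentralSeries ℝ g g m} := by
  obtain ⟨N, hN⟩ := LieModule.IsNilpotent.nilpotent ℝ g g
  refine ⟨N, fun m hm => ?_⟩
  by_contra hlt
  push_neg at hlt
  have h1 : LieModule.lowerCentralSeries ℝ g g m ≤ LieModule.lowerCentralSeries ℝ g g N :=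
    LieModule.antitone_lowerCentralSeries ℝ g g (le_of_lt hlt)
  have h2 : e i ∈ LieModule.lowerCentralSeries ℝ g g N := h1 hm
  rw [hN] at h2
  exact e.ne_zero i (by simpa using h2)

lemma mem_lcs_depth (i : Fin n) : e i ∈ LieModule.lowerCentralSeries ℝ g g (depth e i) := by
  have h0 : (0 : ℕ) ∈ {m | e i ∈ LieModule.lowerCentralSeries ℝ g g m} := by
    simp [LieModule.lowerCentralSeries_zero]
  exact Nat.sSup_mem ⟨0, h0⟩ (depth_bddAbove e i)

lemma depth_lt_of_arrow {i j k : Fin n} (h : Arrow (⇑e) i j k) : depth e i < depth e k := by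
  obtain ⟨c, hc, hb⟩ := h
  have hmem : e k ∈ LieModule.lowerCentralSeries ℝ g g (depth e i + 1) := by
    have h1 : ⁅e j, e i⁆ ∈ LieModule.lowerCentralSeries ℝ g g (depth e i + 1) := by
      rw [LieModule.lowerCentralSeries_succ]
      exact LieSubmodule.lie_mem_lie (LieSubmodule.mem_top (e j)) (mem_lcs_depth e i)
    have h2 : e k = (-c⁻¹) • ⁅e j, e i⁆ := by
      rw [← lie_skew, hb, smul_neg, neg_smul, neg_neg, smul_smul, inv_mul_cancel₀ hc, one_smul]
    rw [h2]
    exact (LieModule.lowerCentralSeries ℝ g g (depth e i + 1)).smul_mem _ h1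
  have : depth e i + 1 ≤ depth e k := le_csSup (depth_bddAbove e k) hmem
  omega

end Depth

/-- Build an involutive permutation from a bijection between two disjoint finsets together with
an involution on the complement. -/
lemma exists_involution_of_matching {α : Type*} [DecidableEq α] (A B : Finset α)
    (hd : Disjoint A B) (β : A ≃ B) (τ : α → α)
    (hτ : ∀ x, x ∉ A → x ∉ B → (τ x ∉ A ∧ τ x ∉ B ∧ τ (τ x) = x)) :
    ∃ σ : Equiv.Perm α,
      (∀ x (h : x ∈ A), σ x = β ⟨x, h⟩) ∧
      (∀ x (h : x ∈ B), σ x = β.symm ⟨x, h⟩) ∧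
      (∀ x, x ∉ A → x ∉ B → σ x = τ x) ∧
      (∀ x, σ (σ x) = x) := by
  classical
  set F : α → α := fun x =>
    if h : x ∈ A then (β ⟨x, h⟩ : α)
    else if h' : x ∈ B then (β.symm ⟨x, h'⟩ : α) else τ x with hF
  have hAval : ∀ x (h : x ∈ A), F x = β ⟨x, h⟩ := by
    intro x h; simp [hF, h]
  have hBval : ∀ x (h : x ∈ B), F x = β.symm ⟨x, h⟩ := by
    intro x h
    have hxA : x ∉ A := fun hxA => (Finset.disjoint_left.1 hd) hxA h
    simp [hF, hxA, h]
  have hCval : ∀ x, x ∉ A → x ∉ B → F x = τ x := by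
    intro x hA hB; simp [hF, hA, hB]
  have hinv : Function.Involutive F := by
    intro x
    by_cases hA : x ∈ A
    · rw [hAval x hA]
      have hmB : (β ⟨x, hA⟩ : α) ∈ B := (β ⟨x, hA⟩).2
      rw [hBval _ hmB]
      have h5 : (⟨(β ⟨x, hA⟩ : α), hmB⟩ : {y // y ∈ B}) = β ⟨x, hA⟩ := Subtype.ext rfl
      rw [h5, Equiv.symm_apply_apply]
    · by_cases hB : x ∈ B
      · rw [hBval x hB]
        have hmA : (β.symm ⟨x, hB⟩ : α) ∈ A := (β.symm ⟨x, hB⟩).2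
        rw [hAval _ hmA]
        have h5 : (⟨(β.symm ⟨x, hB⟩ : α), hmA⟩ : {y // y ∈ A}) = β.symm ⟨x, hB⟩ :=
          Subtype.ext rfl
        rw [h5, Equiv.apply_symm_apply]
      · obtain ⟨h1, h2, h3⟩ := hτ x hA hB
        rw [hCval x hA hB, hCval _ h1 h2, h3]
  exact ⟨hinv.toPerm F, hAval, hBval, hCval, hinv⟩


/-- A nice nilpotent Lie algebra with `r ≤ s + 3`, where `s` is the dimension
of the center and `r` the codimension of the center, has an arrow-breaking involution. -/
theorem statement6 {n : ℕ} {g : Type*} [LieRing g] [LieAlgebra ℝ g]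
    [LieRing.IsNilpotent g]
    (e : Module.Basis (Fin n) ℝ g) (hnice : IsNiceBasis e)
    (hrs : n - Module.finrank ℝ ↥(LieAlgebra.center ℝ g) ≤
      Module.finrank ℝ ↥(LieAlgebra.center ℝ g) + 3) :
    ∃ σ : Equiv.Perm (Fin n), IsArrowBreaking (⇑e) σ := by
  classical
  have instFD : FiniteDimensional ℝ g := Module.Finite.of_basis e
  set S : Finset (Fin n) := Finset.univ.filter (fun i => IsSrc e i) with hSdef
  have hmemS : ∀ i, i ∈ S ↔ IsSrc e i := fun i => by simp [hSdef]
  have hmemSc : ∀ i, i ∈ Sᶜ ↔ ¬ IsSrc e i := fun i => by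
    simp [Finset.mem_compl, hmemS]
  -- cardinality bound
  have hcard : S.card ≤ Sᶜ.card + 3 := by
    have hsle : Module.finrank ℝ ↥(LieAlgebra.center ℝ g) ≤ Sᶜ.card := by
      have h1 : (LieAlgebra.center ℝ g).toSubmodule ≤
          Submodule.span ℝ (⇑e '' {i | ¬ IsSrc e i}) := center_le_span e hnice
      have himg : ⇑e '' {i | ¬ IsSrc e i} = ↑(Sᶜ.image ⇑e) := by
        have hns : ∀ x : Fin n, x ∉ S ↔ ¬ IsSrc e x := fun x => by
          rw [hmemS]
        rw [Finset.coe_image]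
        ext i
        simp [hns]
      have h2 : Module.finrank ℝ ↥(LieAlgebra.center ℝ g) ≤
          Module.finrank ℝ ↥(Submodule.span ℝ (⇑e '' {i | ¬ IsSrc e i})) :=
        Submodule.finrank_mono h1
      have h3 : Module.finrank ℝ ↥(Submodule.span ℝ (⇑e '' {i | ¬ IsSrc e i})) ≤
          (Sᶜ.image ⇑e).card := by
        rw [himg]
        exact finrank_span_finset_le_card (Sᶜ.image ⇑e)
      have h4 : (Sᶜ.image ⇑e).card ≤ Sᶜ.card := Finset.card_image_le
      omega
    have htot : S.card + Sᶜ.card = n := by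
      rw [Finset.card_add_card_compl]
      simp
    omega
  -- main case split
  by_cases hle : S.card ≤ Sᶜ.card
  · -- plenty of non-sources: pair every source with a non-source
    obtain ⟨B, hBsub, hBcard⟩ := Finset.exists_subset_card_eq hle
    have hdisj : Disjoint S B :=
      Finset.disjoint_left.2 fun {x} hxS hxB => by
        have := hBsub hxB
        rw [hmemSc] at this
        exact this ((hmemS x).1 hxS)
    have hβ : S.card = B.card := hBcard.symm
    let β : (S : Finset (Fin n)) ≃ B := Finset.equivOfCardEq hβ
    obtain ⟨σ, hA, hB, hC, hinv⟩ :=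
      exists_involution_of_matching S B hdisj β id (fun x _ _ => ⟨‹x ∉ S›, ‹x ∉ B›, rfl⟩)
    have hmap : ∀ j, IsSrc e j → ¬ IsSrc e (σ j) := by
      intro j hj
      have hjS : j ∈ S := (hmemS j).2 hj
      have : σ j ∈ B := by rw [hA j hjS]; exact (β ⟨j, hjS⟩).2
      have := hBsub this
      exact (hmemSc _).1 this
    refine ⟨σ, hinv, ?_, ?_⟩
    · intro i j k h l h2
      exact hmap j (arrow_snd_src e h) (arrow_snd_src e h2)
    · intro i j k h m h2
      exact hmap j (arrow_snd_src e h) (arrow_snd_src e h2)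
  · -- S.card = Sᶜ.card + t with t ∈ {1,2,3}
    push_neg at hle
    have hSne : S.Nonempty := Finset.card_pos.1 (by omega)
    obtain ⟨v, hvS, hvmax⟩ := S.exists_max_image (depth e) hSne
    have hd_max : ∀ {z : Fin n}, IsSrc e z → depth e z ≤ depth e v :=
      fun {z} hz => hvmax z ((hmemS z).2 hz)
    have head_v_lab : ∀ {l k : Fin n}, Arrow (⇑e) l v k → ¬ IsSrc e k := by
      intro l k h hk
      have h1 := depth_lt_of_arrow e (arrow_symm e h)
      have h2 := hd_max hk
      omega
    have head_v_srcv : ∀ {j k : Fin n}, Arrow (⇑e) v j k → ¬ IsSrc e k := by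
      intro j k h hk
      have h1 := depth_lt_of_arrow e h
      have h2 := hd_max hk
      omega
    have hval : ∀ u : Fin n, ⁅e u, e v⁆ = 0 ∨ ∃ (c₂ : ℝ) (h' : Fin n),
        ⁅e u, e v⁆ = c₂ • e h' ∧ ∀ b : Fin n, ⁅e h', e b⁆ = 0 := by
      intro u
      by_cases h0 : ⁅e u, e v⁆ = 0
      · exact Or.inl h0
      · obtain ⟨k, c, hc, hb⟩ := nice_arrow_of_ne e hnice h0
        exact Or.inr ⟨c, k, hb, not_src_lie e (head_v_lab ⟨c, hc, hb⟩)⟩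
    -- the commuting set C and partner set Qv
    set C : Finset (Fin n) := (S.erase v).filter (fun j => ⁅e v, e j⁆ = 0) with hCdef
    set Qv : Finset (Fin n) := (S.erase v).filter (fun j => ¬ (⁅e v, e j⁆ = 0)) with hQdef
    have hCQ : C.card + Qv.card = S.card - 1 := by
      rw [hCdef, hQdef, Finset.card_filter_add_card_filter_not,
        Finset.card_erase_of_mem hvS]
    have hQle : Qv.card ≤ Sᶜ.card := by
      have hf : ∀ j ∈ Qv, ∃ k, Arrow (⇑e) v j k := by
        intro j hj
        rw [hQdef, Finset.mem_filter] at hj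
        exact nice_arrow_of_ne e hnice hj.2
      choose f hfarr using hf
      refine Finset.card_le_card_of_injOn (fun j => if h : j ∈ Qv then f j h else j) ?_ ?_
      · intro j hj
        simp only [Finset.mem_coe] at hj ⊢
        simp only [hj, dif_pos]
        rw [hmemSc]
        exact head_v_srcv (hfarr j hj)
      · intro j hj j' hj' heq
        simp only [Finset.mem_coe] at hj hj'
        simp only [hj, hj', dif_pos] at heq
        exact nice_label_unique e hnice (heq ▸ hfarr j hj) (hfarr j' hj')
    -- generic claim via Jacobi
    have claim : ∀ y : Fin n, ⁅e v, e y⁆ = 0 → ∀ a z : Fin n, Arrow (⇑e) a y z →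
        IsSrc e z → z = v ∨ (z ∈ C ∧ depth e y < depth e z) := by
      intro y hy a z harr hz
      by_cases hzv : z = v
      · exact Or.inl hzv
      · obtain ⟨c, hc, hb⟩ := harr
        have hyv : ⁅e y, e v⁆ = 0 := by rw [← lie_skew, hy, neg_zero]
        have hz0 : ⁅e z, e v⁆ = 0 := jacobi_break e hc hyv hb (hval a)
        have hvz : ⁅e v, e z⁆ = 0 := by rw [← lie_skew, hz0, neg_zero]
        refine Or.inr ⟨?_, depth_lt_of_arrow e (arrow_symm e ⟨c, hc, hb⟩)⟩
        rw [hCdef, Finset.mem_filter, Finset.mem_erase]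
        exact ⟨⟨hzv, (hmemS z).2 hz⟩, hvz⟩
    have hvnotC : v ∉ C := by
      rw [hCdef]
      simp [Finset.mem_erase]
    have ht3 : S.card = Sᶜ.card + 1 ∨ S.card = Sᶜ.card + 2 ∨ S.card = Sᶜ.card + 3 := by
      omega
    rcases ht3 with ht | ht | ht
    · -- t = 1 : fix v, match the rest
      set T : Finset (Fin n) := {v} with hTdef
      have hTsub : T ⊆ S := by
        intro x hx
        rw [hTdef, Finset.mem_singleton] at hx
        subst hx; exact hvS
      have hASc : (S \ T).card = Sᶜ.card := by
        rw [Finset.card_sdiff_of_subset hTsub, hTdef]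
        simp [ht]
      let β : ((S \ T) : Finset (Fin n)) ≃ (Sᶜ : Finset (Fin n)) := Finset.equivOfCardEq hASc
      have hdisj : Disjoint (S \ T) Sᶜ := by
        refine Finset.disjoint_left.2 fun {x} hx hxc => ?_
        rw [Finset.mem_sdiff] at hx
        rw [hmemSc] at hxc
        exact hxc ((hmemS x).1 hx.1)
      obtain ⟨σ, hmA, hmB, hmC, hinv⟩ := exists_involution_of_matching (S \ T) Sᶜ hdisj β id
        (by
          intro x hxA hxB
          exact ⟨hxA, hxB, rfl⟩)
      have hmapA : ∀ x, x ∈ S \ T → σ x ∈ Sᶜ := by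
        intro x hx
        rw [hmA x hx]
        exact (β ⟨x, hx⟩).2
      have hmapB : ∀ x, x ∈ Sᶜ → σ x ∈ S \ T := by
        intro x hx
        rw [hmB x hx]
        exact (β.symm ⟨x, hx⟩).2
      have hvnA : v ∉ S \ T := by
        rw [Finset.mem_sdiff, hTdef]
        simp
      have hvnB : v ∉ Sᶜ := by
        rw [hmemSc]
        exact fun h => h ((hmemS v).1 hvS)
      have hσv : σ v = v := hmC v hvnA hvnB
      have hmem_split : ∀ j, IsSrc e j → j = v ∨ j ∈ S \ T := by
        intro j hj
        by_cases hjv : j = v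
        · exact Or.inl hjv
        · refine Or.inr ?_
          rw [Finset.mem_sdiff, hTdef]
          exact ⟨(hmemS j).2 hj, by simp [hjv]⟩
      refine ⟨σ, hinv, ?_, ?_⟩
      · intro i j k h l h2
        rcases hmem_split j (arrow_snd_src e h) with hjv | hjA
        · rw [hjv] at h h2
          rw [hσv] at h2
          have hkB : k ∈ Sᶜ := (hmemSc k).2 (head_v_lab h)
          have hkA : σ k ∈ S \ T := hmapB k hkB
          have : IsSrc e (σ k) := (hmemS _).1 (Finset.mem_sdiff.1 hkA).1
          exact head_v_lab h2 this
        · have := hmapA j hjA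
          exact (hmemSc _).1 this (arrow_snd_src e h2)
      · intro i j k h m h2
        rcases hmem_split j (arrow_snd_src e h) with hjv | hjA
        · rw [hjv] at h h2
          have hiv : i ≠ v := by
            rintro rfl
            exact arrow_ne_zero e h (lie_self _)
          have hiA : i ∈ S \ T := by
            rw [Finset.mem_sdiff, hTdef]
            exact ⟨(hmemS i).2 (arrow_fst_src e h), by simp [hiv]⟩
          exact (hmemSc _).1 (hmapA i hiA) (arrow_fst_src e h2)
        · exact (hmemSc _).1 (hmapA j hjA) (arrow_snd_src e h2)
    · -- t = 2 : swap v and y₀, match the rest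
      have hCne : C.Nonempty := Finset.card_pos.1 (by omega)
      obtain ⟨y₀, hy₀C, hy₀max⟩ := C.exists_max_image (depth e) hCne
      have hy₀mem := hy₀C
      rw [hCdef, Finset.mem_filter, Finset.mem_erase] at hy₀mem
      obtain ⟨⟨hy₀v, hy₀S⟩, hvy₀⟩ := hy₀mem
      have hy₀v' : ⁅e y₀, e v⁆ = 0 := by rw [← lie_skew, hvy₀, neg_zero]
      have claim1 : ∀ a z : Fin n, Arrow (⇑e) a y₀ z → IsSrc e z → z = v := by
        intro a z harr hz
        rcases claim y₀ hvy₀ a z harr hz with h | ⟨hzC, hlt⟩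
        · exact h
        · exact absurd (hy₀max z hzC) (by omega)
      set T : Finset (Fin n) := {v, y₀} with hTdef
      have hTsub : T ⊆ S := by
        intro x hx
        rw [hTdef, Finset.mem_insert, Finset.mem_singleton] at hx
        rcases hx with rfl | rfl
        · exact hvS
        · exact hy₀S
      have hTcard : T.card = 2 := by
        rw [hTdef, Finset.card_insert_of_notMem (by simp [hy₀v, Ne.symm hy₀v]),
          Finset.card_singleton]
      have hASc : (S \ T).card = Sᶜ.card := by
        rw [Finset.card_sdiff_of_subset hTsub, hTcard]
        omega
      let β : ((S \ T) : Finset (Fin n)) ≃ (Sᶜ : Finset (Fin n)) := Finset.equivOfCardEq hASc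
      have hdisj : Disjoint (S \ T) Sᶜ := by
        refine Finset.disjoint_left.2 fun {x} hx hxc => ?_
        rw [Finset.mem_sdiff] at hx
        rw [hmemSc] at hxc
        exact hxc ((hmemS x).1 hx.1)
      set τ : Fin n → Fin n := fun x => if x = v then y₀ else if x = y₀ then v else x with hτdef
      have hτv : τ v = y₀ := by simp [hτdef]
      have hτy : τ y₀ = v := by simp [hτdef, hy₀v]
      have hinT : ∀ x, x ∉ S \ T → x ∉ Sᶜ → x ∈ T := by
        intro x hxA hxB
        have hxS : x ∈ S := by
          by_contra hxs
          exact hxB ((hmemSc x).2 fun h => hxs ((hmemS x).2 h))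
        rw [Finset.mem_sdiff] at hxA
        push_neg at hxA
        exact hxA hxS
      have hTnA : ∀ x, x ∈ T → x ∉ S \ T := by
        intro x hx
        rw [Finset.mem_sdiff]
        push_neg
        intro _
        exact hx
      have hTnB : ∀ x, x ∈ T → x ∉ Sᶜ := by
        intro x hx
        rw [hmemSc]
        exact fun h => h ((hmemS x).1 (hTsub hx))
      have hvT : v ∈ T := by rw [hTdef]; simp
      have hyT : y₀ ∈ T := by rw [hTdef]; simp
      obtain ⟨σ, hmA, hmB, hmC, hinv⟩ := exists_involution_of_matching (S \ T) Sᶜ hdisj β τ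
        (by
          intro x hxA hxB
          have hxT := hinT x hxA hxB
          rw [hTdef, Finset.mem_insert, Finset.mem_singleton] at hxT
          rcases hxT with rfl | rfl
          · rw [hτv]
            exact ⟨hTnA _ hyT, hTnB _ hyT, by rw [hτy]⟩
          · rw [hτy]
            exact ⟨hTnA _ hvT, hTnB _ hvT, by rw [hτv]⟩)
      have hmapA : ∀ x, x ∈ S \ T → σ x ∈ Sᶜ := by
        intro x hx
        rw [hmA x hx]
        exact (β ⟨x, hx⟩).2
      have hmapB : ∀ x, x ∈ Sᶜ → σ x ∈ S \ T := by
        intro x hx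
        rw [hmB x hx]
        exact (β.symm ⟨x, hx⟩).2
      have hσv : σ v = y₀ := by rw [hmC v (hTnA _ hvT) (hTnB _ hvT), hτv]
      have hσy : σ y₀ = v := by rw [hmC y₀ (hTnA _ hyT) (hTnB _ hyT), hτy]
      have hmem_split : ∀ j, IsSrc e j → j = v ∨ j = y₀ ∨ j ∈ S \ T := by
        intro j hj
        by_cases hjv : j = v
        · exact Or.inl hjv
        · by_cases hjy : j = y₀
          · exact Or.inr (Or.inl hjy)
          · refine Or.inr (Or.inr ?_)
            rw [Finset.mem_sdiff, hTdef]
            exact ⟨(hmemS j).2 hj, by simp [hjv, hjy]⟩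
      refine ⟨σ, hinv, ?_, ?_⟩
      · intro i j k h l h2
        rcases hmem_split j (arrow_snd_src e h) with hjv | hjy | hjA
        · rw [hjv] at h h2
          rw [hσv] at h2
          have hkB : k ∈ Sᶜ := (hmemSc k).2 (head_v_lab h)
          have hkA : σ k ∈ S \ T := hmapB k hkB
          have hsrck : IsSrc e (σ k) := (hmemS _).1 (Finset.mem_sdiff.1 hkA).1
          have := claim1 l (σ k) h2 hsrck
          exact (Finset.mem_sdiff.1 hkA).2 (this ▸ hvT)
        · rw [hjy] at h h2
          rw [hσy] at h2
          by_cases hkS : IsSrc e k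
          · have hkv : k = v := claim1 i k h hkS
            rw [hkv, hσv] at h2
            exact head_v_lab h2 ((hmemS y₀).1 hy₀S)
          · have hkB : k ∈ Sᶜ := (hmemSc k).2 hkS
            have hkA : σ k ∈ S \ T := hmapB k hkB
            exact head_v_lab h2 ((hmemS _).1 (Finset.mem_sdiff.1 hkA).1)
        · exact (hmemSc _).1 (hmapA j hjA) (arrow_snd_src e h2)
      · intro i j k h m h2
        rcases hmem_split j (arrow_snd_src e h) with hjv | hjy | hjA
        · rw [hjv] at h h2
          have hiv : i ≠ v := by
            rintro rfl
            exact arrow_ne_zero e h (lie_self _)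
          have hiy : i ≠ y₀ := by
            rintro rfl
            exact arrow_ne_zero e h hy₀v'
          have hiA : i ∈ S \ T := by
            rw [Finset.mem_sdiff, hTdef]
            exact ⟨(hmemS i).2 (arrow_fst_src e h), by simp [hiv, hiy]⟩
          exact (hmemSc _).1 (hmapA i hiA) (arrow_fst_src e h2)
        · rw [hjy] at h h2
          have hiy : i ≠ y₀ := by
            rintro rfl
            exact arrow_ne_zero e h (lie_self _)
          have hiv : i ≠ v := by
            rintro rfl
            exact arrow_ne_zero e h hvy₀
          have hiA : i ∈ S \ T := by
            rw [Finset.mem_sdiff, hTdef]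
            exact ⟨(hmemS i).2 (arrow_fst_src e h), by simp [hiv, hiy]⟩
          exact (hmemSc _).1 (hmapA i hiA) (arrow_fst_src e h2)
        · exact (hmemSc _).1 (hmapA j hjA) (arrow_snd_src e h2)
    · -- t = 3 : swap v and x₀, fix y₀, match the rest
      have hCne : C.Nonempty := Finset.card_pos.1 (by omega)
      obtain ⟨y₀, hy₀C, hy₀max⟩ := C.exists_max_image (depth e) hCne
      have hy₀mem := hy₀C
      rw [hCdef, Finset.mem_filter, Finset.mem_erase] at hy₀mem
      obtain ⟨⟨hy₀v, hy₀S⟩, hvy₀⟩ := hy₀mem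
      have hy₀v' : ⁅e y₀, e v⁆ = 0 := by rw [← lie_skew, hvy₀, neg_zero]
      have hCene : (C.erase y₀).Nonempty := by
        apply Finset.card_pos.1
        rw [Finset.card_erase_of_mem hy₀C]
        omega
      obtain ⟨x₀, hx₀Ce, hx₀max⟩ := (C.erase y₀).exists_max_image (depth e) hCene
      have hx₀y₀ : x₀ ≠ y₀ := (Finset.mem_erase.1 hx₀Ce).1
      have hx₀C : x₀ ∈ C := (Finset.mem_erase.1 hx₀Ce).2
      have hx₀mem := hx₀C
      rw [hCdef, Finset.mem_filter, Finset.mem_erase] at hx₀mem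
      obtain ⟨⟨hx₀v, hx₀S⟩, hvx₀⟩ := hx₀mem
      have hx₀v' : ⁅e x₀, e v⁆ = 0 := by rw [← lie_skew, hvx₀, neg_zero]
      have claim1 : ∀ a z : Fin n, Arrow (⇑e) a y₀ z → IsSrc e z → z = v := by
        intro a z harr hz
        rcases claim y₀ hvy₀ a z harr hz with h | ⟨hzC, hlt⟩
        · exact h
        · exact absurd (hy₀max z hzC) (by omega)
      have claim2 : ∀ a z : Fin n, Arrow (⇑e) a x₀ z → IsSrc e z → z = v ∨ z = y₀ := by
        intro a z harr hz
        rcases claim x₀ hvx₀ a z harr hz with h | ⟨hzC, hlt⟩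
        · exact Or.inl h
        · by_cases hzy : z = y₀
          · exact Or.inr hzy
          · have : z ∈ C.erase y₀ := Finset.mem_erase.2 ⟨hzy, hzC⟩
            exact absurd (hx₀max z this) (by omega)
      set T : Finset (Fin n) := {v, x₀, y₀} with hTdef
      have hTsub : T ⊆ S := by
        intro x hx
        rw [hTdef, Finset.mem_insert, Finset.mem_insert, Finset.mem_singleton] at hx
        rcases hx with rfl | rfl | rfl
        · exact hvS
        · exact hx₀S
        · exact hy₀S
      have hTcard : T.card = 3 := by
        rw [hTdef]
        rw [Finset.card_insert_of_notMem (by simp [hx₀v, hy₀v, Ne.symm hx₀v, Ne.symm hy₀v]),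
          Finset.card_insert_of_notMem (by simp [hx₀y₀]), Finset.card_singleton]
      have hASc : (S \ T).card = Sᶜ.card := by
        rw [Finset.card_sdiff_of_subset hTsub, hTcard]
        omega
      let β : ((S \ T) : Finset (Fin n)) ≃ (Sᶜ : Finset (Fin n)) := Finset.equivOfCardEq hASc
      have hdisj : Disjoint (S \ T) Sᶜ := by
        refine Finset.disjoint_left.2 fun {x} hx hxc => ?_
        rw [Finset.mem_sdiff] at hx
        rw [hmemSc] at hxc
        exact hxc ((hmemS x).1 hx.1)
      set τ : Fin n → Fin n := fun x => if x = v then x₀ else if x = x₀ then v else x with hτdef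
      have hτv : τ v = x₀ := by simp [hτdef]
      have hτx : τ x₀ = v := by simp [hτdef, hx₀v]
      have hτy : τ y₀ = y₀ := by simp [hτdef, hy₀v, hx₀y₀, Ne.symm hx₀y₀]
      have hinT : ∀ x, x ∉ S \ T → x ∉ Sᶜ → x ∈ T := by
        intro x hxA hxB
        have hxS : x ∈ S := by
          by_contra hxs
          exact hxB ((hmemSc x).2 fun h => hxs ((hmemS x).2 h))
        rw [Finset.mem_sdiff] at hxA
        push_neg at hxA
        exact hxA hxS
      have hTnA : ∀ x, x ∈ T → x ∉ S \ T := by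
        intro x hx
        rw [Finset.mem_sdiff]
        push_neg
        intro _
        exact hx
      have hTnB : ∀ x, x ∈ T → x ∉ Sᶜ := by
        intro x hx
        rw [hmemSc]
        exact fun h => h ((hmemS x).1 (hTsub hx))
      have hvT : v ∈ T := by rw [hTdef]; simp
      have hxT : x₀ ∈ T := by rw [hTdef]; simp
      have hyT : y₀ ∈ T := by rw [hTdef]; simp
      obtain ⟨σ, hmA, hmB, hmC, hinv⟩ := exists_involution_of_matching (S \ T) Sᶜ hdisj β τ
        (by
          intro x hxA hxB
          have hxT' := hinT x hxA hxB
          rw [hTdef, Finset.mem_insert, Finset.mem_insert, Finset.mem_singleton] at hxT'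
          rcases hxT' with rfl | rfl | rfl
          · rw [hτv]
            exact ⟨hTnA _ hxT, hTnB _ hxT, by rw [hτx]⟩
          · rw [hτx]
            exact ⟨hTnA _ hvT, hTnB _ hvT, by rw [hτv]⟩
          · rw [hτy]
            exact ⟨hTnA _ hyT, hTnB _ hyT, by rw [hτy]⟩)
      have hmapA : ∀ x, x ∈ S \ T → σ x ∈ Sᶜ := by
        intro x hx
        rw [hmA x hx]
        exact (β ⟨x, hx⟩).2
      have hmapB : ∀ x, x ∈ Sᶜ → σ x ∈ S \ T := by
        intro x hx
        rw [hmB x hx]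
        exact (β.symm ⟨x, hx⟩).2
      have hσv : σ v = x₀ := by rw [hmC v (hTnA _ hvT) (hTnB _ hvT), hτv]
      have hσx : σ x₀ = v := by rw [hmC x₀ (hTnA _ hxT) (hTnB _ hxT), hτx]
      have hσy : σ y₀ = y₀ := by rw [hmC y₀ (hTnA _ hyT) (hTnB _ hyT), hτy]
      have hmem_split : ∀ j, IsSrc e j → j = v ∨ j = x₀ ∨ j = y₀ ∨ j ∈ S \ T := by
        intro j hj
        by_cases hjv : j = v
        · exact Or.inl hjv
        · by_cases hjx : j = x₀
          · exact Or.inr (Or.inl hjx)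
          · by_cases hjy : j = y₀
            · exact Or.inr (Or.inr (Or.inl hjy))
            · refine Or.inr (Or.inr (Or.inr ?_))
              rw [Finset.mem_sdiff, hTdef]
              exact ⟨(hmemS j).2 hj, by simp [hjv, hjx, hjy]⟩
      refine ⟨σ, hinv, ?_, ?_⟩
      · intro i j k h l h2
        rcases hmem_split j (arrow_snd_src e h) with hjv | hjx | hjy | hjA
        · rw [hjv] at h h2
          rw [hσv] at h2
          have hkB : k ∈ Sᶜ := (hmemSc k).2 (head_v_lab h)
          have hkA : σ k ∈ S \ T := hmapB k hkB
          have hsrck : IsSrc e (σ k) := (hmemS _).1 (Finset.mem_sdiff.1 hkA).1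
          rcases claim2 l (σ k) h2 hsrck with hh | hh
          · exact (Finset.mem_sdiff.1 hkA).2 (hh ▸ hvT)
          · exact (Finset.mem_sdiff.1 hkA).2 (hh ▸ hyT)
        · rw [hjx] at h h2
          rw [hσx] at h2
          by_cases hkS : IsSrc e k
          · rcases claim2 i k h hkS with hkv | hky
            · rw [hkv, hσv] at h2
              exact head_v_lab h2 ((hmemS x₀).1 hx₀S)
            · rw [hky, hσy] at h2
              exact head_v_lab h2 ((hmemS y₀).1 hy₀S)
          · have hkB : k ∈ Sᶜ := (hmemSc k).2 hkS
            have hkA : σ k ∈ S \ T := hmapB k hkB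
            exact head_v_lab h2 ((hmemS _).1 (Finset.mem_sdiff.1 hkA).1)
        · rw [hjy] at h h2
          rw [hσy] at h2
          by_cases hkS : IsSrc e k
          · have hkv : k = v := claim1 i k h hkS
            rw [hkv, hσv] at h2
            rcases claim1 l x₀ h2 ((hmemS x₀).1 hx₀S) with hh
            exact hx₀v hh
          · have hkB : k ∈ Sᶜ := (hmemSc k).2 hkS
            have hkA : σ k ∈ S \ T := hmapB k hkB
            have hsrck : IsSrc e (σ k) := (hmemS _).1 (Finset.mem_sdiff.1 hkA).1
            have := claim1 l (σ k) h2 hsrck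
            exact (Finset.mem_sdiff.1 hkA).2 (this ▸ hvT)
        · exact (hmemSc _).1 (hmapA j hjA) (arrow_snd_src e h2)
      · intro i j k h m h2
        rcases hmem_split j (arrow_snd_src e h) with hjv | hjx | hjy | hjA
        · rw [hjv] at h h2
          have hiv : i ≠ v := by
            rintro rfl
            exact arrow_ne_zero e h (lie_self _)
          have hix : i ≠ x₀ := by
            rintro rfl
            exact arrow_ne_zero e h hx₀v'
          have hiy : i ≠ y₀ := by
            rintro rfl
            exact arrow_ne_zero e h hy₀v'
          have hiA : i ∈ S \ T := by
            rw [Finset.mem_sdiff, hTdef]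
            exact ⟨(hmemS i).2 (arrow_fst_src e h), by simp [hiv, hix, hiy]⟩
          exact (hmemSc _).1 (hmapA i hiA) (arrow_fst_src e h2)
        · rw [hjx] at h h2
          have hix : i ≠ x₀ := by
            rintro rfl
            exact arrow_ne_zero e h (lie_self _)
          have hiv : i ≠ v := by
            rintro rfl
            exact arrow_ne_zero e h hvx₀
          by_cases hiy : i = y₀
          · rw [hiy, hσy, hσx] at h2
            exact arrow_ne_zero e h2 hy₀v'
          · have hiA : i ∈ S \ T := by
              rw [Finset.mem_sdiff, hTdef]
              exact ⟨(hmemS i).2 (arrow_fst_src e h), by simp [hiv, hix, hiy]⟩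
            exact (hmemSc _).1 (hmapA i hiA) (arrow_fst_src e h2)
        · rw [hjy] at h h2
          have hiy : i ≠ y₀ := by
            rintro rfl
            exact arrow_ne_zero e h (lie_self _)
          have hiv : i ≠ v := by
            rintro rfl
            exact arrow_ne_zero e h hvy₀
          by_cases hix : i = x₀
          · rw [hix, hσx, hσy] at h2
            exact arrow_ne_zero e h2 hvy₀
          · have hiA : i ∈ S \ T := by
              rw [Finset.mem_sdiff, hTdef]
              exact ⟨(hmemS i).2 (arrow_fst_src e h), by simp [hiv, hix, hiy]⟩
            exact (hmemSc _).1 (hmapA i hiA) (arrow_fst_src e h2)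
        · exact (hmemSc _).1 (hmapA j hjA) (arrow_snd_src e h2)
end ArrowBreakingPaper
end

section
/- Let n = 2k+1 be odd with k ≥ 1, let ε_1,…,ε_{n+1} be the standard basis of ℝ^{n+1}, let Π⁺ = {ε_i − ε_j : 1 ≤ i < j ≤ n+1}, and for i = 1,…,n set h(i) = i+1 if i is odd and h(i) = i+2 if i is even. Let S = {ε_i − ε_j : 1 ≤ i ≤ n, h(i) ≤ j ≤ n+1}, and define σ on S by σ(ε_i − ε_j) = ε_{i'} − ε_{s_i(j)}, where s_i(j) = n+1+h(i)−j and i' = 1 if i = 1, i' = i+1 if i is even, and i' = i−1 if i > 1 is odd. Then σ is a well-defined order-two permutation of S, and for all γ, δ ∈ S: (a) if γ + δ ∈ Π⁺ then σ(γ) + σ(δ) ∉ Π⁺; and (b) if δ − γ ∈ S then σ(δ) − σ(γ) ∉ S. -/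
open scoped BigOperators

namespace ArrowBreakingPaper

variable {ι : Type*} {g : Type*} [LieRing g] [LieAlgebra ℝ g]

/-- The standard basis vectors `ε i` of `ℝ^∞`. -/
noncomputable def eps (i : ℕ) : ℕ → ℝ := fun j => if j = i then 1 else 0

/-- The positive roots of `A_n`: `ε_i − ε_j`, `1 ≤ i < j ≤ n+1`. -/
def PiPlusA (n : ℕ) : Set (ℕ → ℝ) :=
  {x | ∃ i j : ℕ, 1 ≤ i ∧ i < j ∧ j ≤ n + 1 ∧ x = eps i - eps j}

/-- `h(i) = i+1` for odd `i`, `h(i) = i+2` for even `i`. -/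
def hA (i : ℕ) : ℕ := if Odd i then i + 1 else i + 2

/-- Index pairs `(i,j)` of the roots `ε_i − ε_j` in `S`. -/
def TA (n : ℕ) : Set (ℕ × ℕ) :=
  {p | 1 ≤ p.1 ∧ p.1 ≤ n ∧ hA p.1 ≤ p.2 ∧ p.2 ≤ n + 1}

/-- The set of roots `S = {ε_i − ε_j : 1 ≤ i ≤ n, h(i) ≤ j ≤ n+1}`. -/
def SA (n : ℕ) : Set (ℕ → ℝ) := {x | ∃ p ∈ TA n, x = eps p.1 - eps p.2}

/-- The involution `σ(ε_i − ε_j) = ε_{i'} − ε_{s_i(j)}`, written on index pairs. -/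
def sigA (n : ℕ) (p : ℕ × ℕ) : ℕ × ℕ :=
  ((if p.1 = 1 then 1 else if Even p.1 then p.1 + 1 else p.1 - 1),
    n + 1 + hA p.1 - p.2)


lemma pos_one {t x y : ℕ} (h : ((if t = x then (1:ℝ) else 0) - if t = y then 1 else 0) = 1) :
    t = x := by
  by_cases h1 : t = x
  · exact h1
  · rw [if_neg h1] at h; split_ifs at h <;> norm_num at h

lemma neg_one {t x y : ℕ} (h : ((if t = x then (1:ℝ) else 0) - if t = y then 1 else 0) = -1) :
    t = y := by
  by_cases h2 : t = y
  · exact h2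
  · rw [if_neg h2] at h; split_ifs at h <;> norm_num at h

lemma root_eq {a b x y : ℕ} (hab : a ≠ b) (h : eps a - eps b = eps x - eps y) :
    a = x ∧ b = y := by
  have ha := congrFun h a
  have hb := congrFun h b
  simp only [eps, Pi.sub_apply, if_pos rfl, if_neg hab, if_neg (Ne.symm hab), if_true,
    sub_zero, zero_sub] at ha hb
  exact ⟨pos_one ha.symm, neg_one hb.symm⟩

lemma sum_root {a b c d x y : ℕ} (hab : a ≠ b) (hcd : c ≠ d) (hxy : x ≠ y)
    (h : (eps a - eps b) + (eps c - eps d) = eps x - eps y) :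
    (b = c ∧ x = a ∧ y = d) ∨ (a = d ∧ x = c ∧ y = b) := by
  by_cases hbc : b = c
  · by_cases had : a = d
    · exfalso
      subst hbc; subst had
      have hx := congrFun h x
      simp only [eps, Pi.add_apply, Pi.sub_apply, if_pos rfl, if_neg hxy, if_true,
        sub_zero] at hx
      split_ifs at hx <;> norm_num at hx
    · left
      subst hbc
      have h' : eps a - eps d = eps x - eps y := by rw [← h]; abel
      obtain ⟨h1, h2⟩ := root_eq had h'
      exact ⟨rfl, h1.symm, h2.symm⟩
  · by_cases had : a = d
    · right
      subst had
      have h' : eps c - eps b = eps x - eps y := by rw [← h]; abel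
      obtain ⟨h1, h2⟩ := root_eq (fun hcb => hbc hcb.symm) h'
      exact ⟨rfl, h1.symm, h2.symm⟩
    · exfalso
      by_cases hac : a = c
      · subst hac
        have ha := congrFun h a
        simp only [eps, Pi.add_apply, Pi.sub_apply, if_pos rfl, if_neg hab, if_neg had,
          if_true, sub_zero] at ha
        split_ifs at ha <;> norm_num at ha
      · have ha := congrFun h a
        have hc := congrFun h c
        simp only [eps, Pi.add_apply, Pi.sub_apply, if_pos rfl, if_neg hab, if_neg had,
          if_neg hac, if_neg (Ne.symm hac), if_neg hcd, if_neg (fun hcb : c = b => hbc hcb.symm),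
          if_true, sub_zero, zero_sub, add_zero, zero_add] at ha hc
        have h1 : a = x := pos_one ha.symm
        have h2 : c = x := pos_one hc.symm
        exact hac (h1.trans h2.symm)

lemma hA_eq (i : ℕ) : hA i = if i % 2 = 1 then i + 1 else i + 2 := by
  simp [hA, Nat.odd_iff]

lemma mem_lt {n : ℕ} {p : ℕ × ℕ} (hp : p ∈ TA n) : p.1 < p.2 := by
  obtain ⟨h1, h2, h3, h4⟩ := hp
  rw [hA_eq] at h3
  split_ifs at h3 <;> omega

lemma sig_mem {n k : ℕ} (hn : n = 2 * k + 1) {p : ℕ × ℕ} (hp : p ∈ TA n) :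
    sigA n p ∈ TA n := by
  obtain ⟨i, j⟩ := p
  obtain ⟨h1, h2, h3, h4⟩ := hp
  simp only [hA_eq] at h3
  simp only [TA, Set.mem_setOf_eq, sigA, hA_eq, Nat.even_iff]
  split_ifs at * <;> omega

lemma sig_invol {n k : ℕ} (hn : n = 2 * k + 1) {p : ℕ × ℕ} (hp : p ∈ TA n) :
    sigA n (sigA n p) = p := by
  obtain ⟨i, j⟩ := p
  obtain ⟨h1, h2, h3, h4⟩ := hp
  simp only [hA_eq] at h3
  simp only [sigA, hA_eq, Nat.even_iff, Prod.mk.injEq]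
  constructor <;> split_ifs at * <;> omega

lemma keyA {n k : ℕ} (hn : n = 2 * k + 1) {p q : ℕ × ℕ} (hp : p ∈ TA n) (hq : q ∈ TA n)
    (hpq : p.2 = q.1) : (sigA n p).2 ≠ (sigA n q).1 ∧ (sigA n p).1 ≠ (sigA n q).2 := by
  obtain ⟨i, j⟩ := p
  obtain ⟨i', j'⟩ := q
  obtain ⟨h1, h2, h3, h4⟩ := hp
  obtain ⟨h5, h6, h7, h8⟩ := hq
  simp only [hA_eq] at h3 h7
  simp only at hpq
  simp only [sigA, hA_eq, Nat.even_iff]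
  constructor <;> split_ifs at * <;> omega

lemma keyB1 {n k : ℕ} (hn : n = 2 * k + 1) {p q : ℕ × ℕ} (hp : p ∈ TA n) (hq : q ∈ TA n)
    (e1 : q.1 = p.1) (e2 : hA p.2 ≤ q.2) :
    (sigA n q).2 ≠ (sigA n p).2 ∧ ¬ hA (sigA n p).2 ≤ (sigA n q).2 := by
  obtain ⟨i, j⟩ := p
  obtain ⟨i', j'⟩ := q
  obtain ⟨h1, h2, h3, h4⟩ := hp
  obtain ⟨h5, h6, h7, h8⟩ := hq
  simp only [hA_eq] at h3 h7 e2
  simp only at e1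
  simp only [sigA, hA_eq, Nat.even_iff]
  constructor <;> split_ifs at * <;> omega

lemma keyB2 {n k : ℕ} (hn : n = 2 * k + 1) {p q : ℕ × ℕ} (hp : p ∈ TA n) (hq : q ∈ TA n)
    (e1 : q.2 = p.2) (e2 : hA q.1 ≤ p.1) :
    (sigA n q).2 ≠ (sigA n p).2 ∧ (sigA n q).1 ≠ (sigA n p).1 := by
  obtain ⟨i, j⟩ := p
  obtain ⟨i', j'⟩ := q
  obtain ⟨h1, h2, h3, h4⟩ := hp
  obtain ⟨h5, h6, h7, h8⟩ := hq
  simp only [hA_eq] at h3 h7 e2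
  simp only at e1
  simp only [sigA, hA_eq, Nat.even_iff]
  constructor <;> split_ifs at * <;> omega

/-- `σ` is a well-defined order-two permutation of `S` and is arrow-breaking:
(a) sums of roots of `S` that are roots are broken by `σ`, and (b) differences of roots of `S`
that lie in `S` are broken by `σ`. -/
theorem statement9 (k : ℕ) (hk : 1 ≤ k) (n : ℕ) (hn : n = 2 * k + 1) :
    (∀ p ∈ TA n, sigA n p ∈ TA n) ∧
    (∀ p ∈ TA n, sigA n (sigA n p) = p) ∧
    (∃ p ∈ TA n, sigA n p ≠ p) ∧
    (∀ p ∈ TA n, ∀ q ∈ TA n,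
      (eps p.1 - eps p.2) + (eps q.1 - eps q.2) ∈ PiPlusA n →
        (eps (sigA n p).1 - eps (sigA n p).2) + (eps (sigA n q).1 - eps (sigA n q).2)
          ∉ PiPlusA n) ∧
    (∀ p ∈ TA n, ∀ q ∈ TA n,
      (eps q.1 - eps q.2) - (eps p.1 - eps p.2) ∈ SA n →
        (eps (sigA n q).1 - eps (sigA n q).2) - (eps (sigA n p).1 - eps (sigA n p).2)
          ∉ SA n) := by
  refine ⟨fun p hp => sig_mem hn hp, fun p hp => sig_invol hn hp, ?_, ?_, ?_⟩
  · refine ⟨(2, 4), ⟨by omega, by omega, by simp [hA_eq], by omega⟩, ?_⟩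
    simp [sigA, Prod.ext_iff]
  · intro p hp q hq hsum hcon
    obtain ⟨a, b, _, hab, _, heq⟩ := hsum
    obtain ⟨a', b', _, hab', _, heq'⟩ := hcon
    have hpne : p.1 ≠ p.2 := Nat.ne_of_lt (mem_lt hp)
    have hqne : q.1 ≠ q.2 := Nat.ne_of_lt (mem_lt hq)
    have hpne' : (sigA n p).1 ≠ (sigA n p).2 := Nat.ne_of_lt (mem_lt (sig_mem hn hp))
    have hqne' : (sigA n q).1 ≠ (sigA n q).2 := Nat.ne_of_lt (mem_lt (sig_mem hn hq))
    have h1 := sum_root hpne hqne (Nat.ne_of_lt hab) heq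
    have h2 := sum_root hpne' hqne' (Nat.ne_of_lt hab') heq'
    rcases h1 with ⟨e1, -, -⟩ | ⟨e1, -, -⟩ <;> rcases h2 with ⟨e2, -, -⟩ | ⟨e2, -, -⟩
    · exact (keyA hn hp hq e1).1 e2
    · exact (keyA hn hp hq e1).2 e2
    · exact (keyA hn hq hp e1.symm).2 e2.symm
    · exact (keyA hn hq hp e1.symm).1 e2.symm
  · intro p hp q hq hsub hcon
    obtain ⟨r, hr, heq⟩ := hsub
    obtain ⟨r', hr', heq'⟩ := hcon
    have h' : (eps q.1 - eps q.2) + (eps p.2 - eps p.1) = eps r.1 - eps r.2 := by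
      rw [← heq]; abel
    have h'' : (eps (sigA n q).1 - eps (sigA n q).2)
        + (eps (sigA n p).2 - eps (sigA n p).1) = eps r'.1 - eps r'.2 := by
      rw [← heq']; abel
    have hpne : p.1 ≠ p.2 := Nat.ne_of_lt (mem_lt hp)
    have hqne : q.1 ≠ q.2 := Nat.ne_of_lt (mem_lt hq)
    have hpne' : (sigA n p).1 ≠ (sigA n p).2 := Nat.ne_of_lt (mem_lt (sig_mem hn hp))
    have hqne' : (sigA n q).1 ≠ (sigA n q).2 := Nat.ne_of_lt (mem_lt (sig_mem hn hq))
    have h1 := sum_root hqne (Ne.symm hpne) (Nat.ne_of_lt (mem_lt hr)) h'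
    have h2 := sum_root hqne' (Ne.symm hpne') (Nat.ne_of_lt (mem_lt hr')) h''
    rcases h1 with ⟨e1, f1, f2⟩ | ⟨e1, f1, f2⟩
    · have e2 : hA q.1 ≤ p.1 := by have := hr.2.2.1; rwa [f1, f2] at this
      rcases h2 with ⟨e2', -, -⟩ | ⟨e2', -, -⟩
      · exact (keyB2 hn hp hq e1 e2).1 e2'
      · exact (keyB2 hn hp hq e1 e2).2 e2'
    · have e2 : hA p.2 ≤ q.2 := by have := hr.2.2.1; rwa [f1, f2] at this
      rcases h2 with ⟨e2', -, -⟩ | ⟨e2', f1', f2'⟩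
      · exact (keyB1 hn hp hq e1 e2).1 e2'
      · have := hr'.2.2.1; rw [f1', f2'] at this
        exact (keyB1 hn hp hq e1 e2).2 this


end ArrowBreakingPaper
end
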